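/- arXiv:1601.02187 — 4 statements merged into one kernel-verified Lean document; each statement's English description precedes it below -/
import Mathlib

section
/- Let Θ be a connected simple graph on which a group G acts. Let 𝒫 be a property of finite sets of edges of Θ which is stable under the G-action, under passing to subsets, and under finite unions. If there exists a set of cutting edges whose boundary set has 𝒫 (i.e. the set of cutting edges itself has 𝒫), then there exists a cut C whose boundary has 𝒫, such that the cuts C and g·C are nested for every g ∈ G, and such that the complement C* is also a cut. -/
section Cuts

variable {V : Type*}

/-- A finite set `F` of edges of `Θ` is a set of *cutting edges* if `Θ − F` is
disconnected and has at least two infinite connected components. -/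
def IsCuttingEdges (Θ : SimpleGraph V) (F : Set (Sym2 V)) : Prop :=
  F.Finite ∧ F ⊆ Θ.edgeSet ∧ ¬(Θ.deleteEdges F).Connected ∧
    ∃ K L : (Θ.deleteEdges F).ConnectedComponent,
      K ≠ L ∧ K.supp.Infinite ∧ L.supp.Infinite

/-- A *cut* is the vertex set of an infinite connected component of `Θ − F`
for some set of cutting edges `F`. -/
def IsCut (Θ : SimpleGraph V) (C : Set V) : Prop :=
  ∃ F : Set (Sym2 V), IsCuttingEdges Θ F ∧
    ∃ K : (Θ.deleteEdges F).ConnectedComponent, K.supp.Infinite ∧ C = K.supp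

/-- The *boundary* of a set of vertices `C`: all edges of `Θ` with exactly one
endpoint in `C`. -/
def cutBdry (Θ : SimpleGraph V) (C : Set V) : Set (Sym2 V) :=
  {e | e ∈ Θ.edgeSet ∧ ∃ u v : V, e = s(u, v) ∧ u ∈ C ∧ v ∉ C}

/-- A `P`-cut: a cut whose boundary has property `P`. -/
def IsPCut (Θ : SimpleGraph V) (P : Set (Sym2 V) → Prop) (C : Set V) : Prop :=
  IsCut Θ C ∧ P (cutBdry Θ C)

/-- A `P`-narrow cut: a `P`-cut whose boundary has minimal cardinality among
all `P`-cuts. -/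
def IsPNarrow (Θ : SimpleGraph V) (P : Set (Sym2 V) → Prop) (C : Set V) : Prop :=
  IsPCut Θ P C ∧ ∀ D : Set V, IsPCut Θ P D → (cutBdry Θ C).ncard ≤ (cutBdry Θ D).ncard

/-- Two subsets `C` and `D` of the vertex set are *nested* if `C` or its
complement is contained in `D` or its complement. -/
def Nested (C D : Set V) : Prop :=
  C ⊆ D ∨ C ⊆ Dᶜ ∨ Cᶜ ⊆ D ∨ Cᶜ ⊆ Dᶜ

end Cuts

namespace KroenAux

open SimpleGraph Set

variable {V : Type*} {Θ : SimpleGraph V} {X Y C D : Set V} {x y : V}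

lemma mem_cutBdry_of_adj {a b : V} (hab : Θ.Adj a b) (ha : a ∈ X) (hb : b ∉ X) :
    s(a, b) ∈ cutBdry Θ X :=
  ⟨(Θ.mem_edgeSet).2 hab, a, b, rfl, ha, hb⟩

lemma endpoints_of_mem_cutBdry {a b : V} (h : s(a, b) ∈ cutBdry Θ X) :
    (a ∈ X ∧ b ∉ X) ∨ (b ∈ X ∧ a ∉ X) := by
  obtain ⟨-, u, v, huv, hu, hv⟩ := h
  rw [Sym2.eq_iff] at huv
  rcases huv with ⟨rfl, rfl⟩ | ⟨rfl, rfl⟩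
  · exact Or.inl ⟨hu, hv⟩
  · exact Or.inr ⟨hu, hv⟩

lemma not_mem_cutBdry_of_both {a b : V} (ha : a ∈ X) (hb : b ∈ X) :
    s(a, b) ∉ cutBdry Θ X := by
  intro h
  rcases endpoints_of_mem_cutBdry h with ⟨-, h2⟩ | ⟨-, h2⟩
  · exact h2 hb
  · exact h2 ha

lemma not_mem_cutBdry_of_both_not {a b : V} (ha : a ∉ X) (hb : b ∉ X) :
    s(a, b) ∉ cutBdry Θ X := by
  intro h
  rcases endpoints_of_mem_cutBdry h with ⟨h1, -⟩ | ⟨h1, -⟩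
  · exact ha h1
  · exact hb h1

lemma cutBdry_subset_edgeSet : cutBdry Θ X ⊆ Θ.edgeSet := fun _ he => he.1

lemma adj_del {F : Set (Sym2 V)} {a b : V} (h : Θ.Adj a b) (hn : s(a, b) ∉ F) :
    (Θ.deleteEdges F).Adj a b := by
  rw [SimpleGraph.deleteEdges_adj]; exact ⟨h, hn⟩

lemma cutBdry_compl : cutBdry Θ Xᶜ = cutBdry Θ X := by
  ext e
  constructor
  · rintro ⟨he, u, v, rfl, hu, hv⟩
    have hv' : v ∈ X := by simpa using hv
    have hu' : u ∉ X := by simpa using hu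
    exact ⟨he, v, u, Sym2.eq_swap, hv', hu'⟩
  · rintro ⟨he, u, v, rfl, hu, hv⟩
    have hu' : u ∉ Xᶜ := by simpa using hu
    exact ⟨he, v, u, Sym2.eq_swap, hv, hu'⟩

/-- The general walk-transfer and confinement principle. -/
lemma reach_transfer {F₁ F₂ : Set (Sym2 V)} {T : Set V}
    (hstep : ∀ a b, Θ.Adj a b → s(a, b) ∉ F₁ → a ∈ T → b ∈ T)
    (hF : ∀ a b, Θ.Adj a b → s(a, b) ∉ F₁ → a ∈ T → b ∈ T → s(a, b) ∉ F₂)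
    (hx : x ∈ T) (h : (Θ.deleteEdges F₁).Reachable x y) :
    y ∈ T ∧ (Θ.deleteEdges F₂).Reachable x y := by
  obtain ⟨w⟩ := h
  induction w with
  | nil => exact ⟨hx, Reachable.refl _⟩
  | @cons a b c hab p ih =>
    rw [SimpleGraph.deleteEdges_adj] at hab
    have hb : b ∈ T := hstep a b hab.1 hab.2 hx
    obtain ⟨hy, hr⟩ := ih hb
    exact ⟨hy, Reachable.trans (Adj.reachable
      (adj_del hab.1 (hF a b hab.1 hab.2 hx hb))) hr⟩

lemma step_lemma {a b : V} (hab : Θ.Adj a b) (hn : s(a, b) ∉ cutBdry Θ X) (ha : a ∈ X) :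
    b ∈ X := by
  by_contra hb
  exact hn (mem_cutBdry_of_adj hab ha hb)

/-- Confinement of walks in `Θ - ∂X` to a side. -/
lemma mem_of_reach (hx : x ∈ X) (h : (Θ.deleteEdges (cutBdry Θ X)).Reachable x y) :
    y ∈ X :=
  (reach_transfer (F₂ := cutBdry Θ X) (fun a b hab hn ha => step_lemma hab hn ha)
    (fun a b _ hn _ _ => hn) hx h).1

def ConnWithin (Θ : SimpleGraph V) (X : Set V) : Prop :=
  ∀ ⦃x⦄, x ∈ X → ∀ ⦃y⦄, y ∈ X → (Θ.deleteEdges (cutBdry Θ X)).Reachable x y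

lemma connWithin_union (hX : ConnWithin Θ X) (hY : ConnWithin Θ Y)
    (hXY : (X ∩ Y).Nonempty) : ConnWithin Θ (X ∪ Y) := by
  obtain ⟨z, hzX, hzY⟩ := hXY
  have key : ∀ ⦃u⦄, u ∈ X ∪ Y → (Θ.deleteEdges (cutBdry Θ (X ∪ Y))).Reachable u z := by
    intro u hu
    rcases hu with hu | hu
    · exact (reach_transfer (fun a b hab hn ha => step_lemma hab hn ha)
        (fun a b hab _ ha hb => not_mem_cutBdry_of_both (Or.inl ha) (Or.inl hb))
        hu (hX hu hzX)).2
    · exact (reach_transfer (fun a b hab hn ha => step_lemma hab hn ha)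
        (fun a b hab _ ha hb => not_mem_cutBdry_of_both (Or.inr ha) (Or.inr hb))
        hu (hY hu hzY)).2
  exact fun u hu v hv => (key hu).trans (key hv).symm

/-- The set of vertices reachable from `x` in `Θ - ∂X`. -/
def compSet (Θ : SimpleGraph V) (X : Set V) (x : V) : Set V :=
  {y | (Θ.deleteEdges (cutBdry Θ X)).Reachable x y}

lemma self_mem_compSet : x ∈ compSet Θ X x := Reachable.refl _

lemma compSet_subset (hx : x ∈ X) : compSet Θ X x ⊆ X :=
  fun _ hy => mem_of_reach hx hy

lemma compSet_eq_of_mem (h : y ∈ compSet Θ X x) : compSet Θ X y = compSet Θ X x := by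
  ext z
  exact ⟨fun hz => Reachable.trans h hz, fun hz => Reachable.trans (Reachable.symm h) hz⟩

lemma compSet_disjoint (h : y ∉ compSet Θ X x) (z : V) :
    z ∈ compSet Θ X y → z ∈ compSet Θ X x → False := by
  intro h1 h2
  exact h (by rw [← compSet_eq_of_mem h2]; exact Reachable.symm h1)

lemma connWithin_compSet (hx : x ∈ X) : ConnWithin Θ (compSet Θ X x) := by
  have key : ∀ ⦃u⦄, u ∈ compSet Θ X x →
      (Θ.deleteEdges (cutBdry Θ (compSet Θ X x))).Reachable x u := by
    intro u hu
    refine (reach_transfer (T := compSet Θ X x)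
      (fun a b hab hn ha => Reachable.trans ha (Adj.reachable (adj_del hab hn)))
      (fun a b hab hn ha hb => not_mem_cutBdry_of_both ha hb)
      self_mem_compSet hu).2
  exact fun u hu v hv => (key hu).symm.trans (key hv)

lemma cutBdry_compSet_subset (hx : x ∈ X) :
    cutBdry Θ (compSet Θ X x) ⊆ cutBdry Θ X := by
  rintro e ⟨he, u, v, rfl, hu, hv⟩
  by_contra hn
  exact hv (Reachable.trans hu (Adj.reachable (adj_del ((Θ.mem_edgeSet).1 he) hn)))

/-- Crossing dart existence along a walk. -/
lemma exists_cross_dart {G : SimpleGraph V} {T : Set V} :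
    ∀ {x y : V} (w : G.Walk x y), x ∈ T → y ∉ T →
    ∃ d : G.Dart, d ∈ w.darts ∧ d.toProd.1 ∈ T ∧ d.toProd.2 ∉ T := by
  intro x y w
  induction w with
  | nil => intro hx hy; exact absurd hx hy
  | @cons a b c hab p ih =>
    intro hx hy
    by_cases hb : b ∈ T
    · obtain ⟨d, hd, h1, h2⟩ := ih hb hy
      exact ⟨d, by rw [Walk.darts_cons]; exact List.mem_cons_of_mem _ hd, h1, h2⟩
    · exact ⟨⟨(a, b), hab⟩, by rw [Walk.darts_cons]; exact List.mem_cons_self, hx, hb⟩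

/-- Every component inside `X` attaches to the boundary of `X`. -/
lemma attach (hconn : Θ.Connected) (hx : x ∈ X) (hXc : Xᶜ.Nonempty) :
    ∃ a b, Θ.Adj a b ∧ a ∈ compSet Θ X x ∧ b ∉ X := by
  obtain ⟨z, hz⟩ := hXc
  obtain ⟨w⟩ := hconn.preconnected x z
  have hzn : z ∉ compSet Θ X x := fun h => hz (compSet_subset hx h)
  obtain ⟨d, -, h1, h2⟩ := exists_cross_dart w self_mem_compSet hzn
  refine ⟨d.toProd.1, d.toProd.2, d.adj, h1, fun hbX => ?_⟩
  by_cases hbd : s(d.toProd.1, d.toProd.2) ∈ cutBdry Θ X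
  · rcases endpoints_of_mem_cutBdry hbd with ⟨-, hb⟩ | ⟨-, ha⟩
    · exact hb hbX
    · exact ha (compSet_subset hx h1)
  · exact h2 (Reachable.trans h1 (Adj.reachable (adj_del d.adj hbd)))

/-- Finitely many components inside X, hence an infinite one if X is infinite. -/
lemma exists_infinite_compSet (hconn : Θ.Connected) (hX : X.Infinite)
    (hfin : (cutBdry Θ X).Finite) (hXc : Xᶜ.Nonempty) :
    ∃ x ∈ X, (compSet Θ X x).Infinite := by
  by_contra hcon
  push_neg at hcon
  set 𝒞 : Set (Set V) := (fun x => compSet Θ X x) '' X with h𝒞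
  have hatt : ∀ S ∈ 𝒞, ∃ p : V × V, Θ.Adj p.1 p.2 ∧ p.1 ∈ S ∧ p.2 ∉ X := by
    rintro S ⟨x, hx, rfl⟩
    obtain ⟨a, b, h1, h2, h3⟩ := attach hconn hx hXc
    exact ⟨(a, b), h1, h2, h3⟩
  classical
  obtain ⟨v₀⟩ := hconn.nonempty
  set f : Set V → Sym2 V := fun S => if h : S ∈ 𝒞 then
    s((hatt S h).choose.1, (hatt S h).choose.2) else s(v₀, v₀) with hf
  have hmemX : ∀ S ∈ 𝒞, S ⊆ X := by rintro S ⟨x, hx, rfl⟩; exact compSet_subset hx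
  have hSeq : ∀ S ∈ 𝒞, ∀ a ∈ S, S = compSet Θ X a := by
    rintro S ⟨x, hx, rfl⟩ a ha; exact (compSet_eq_of_mem ha).symm
  have hinj : Set.InjOn f 𝒞 := by
    intro S₁ h₁ S₂ h₂ heq
    rw [hf] at heq; simp only [dif_pos h₁, dif_pos h₂] at heq
    obtain ⟨ha₁, hm₁, hn₁⟩ := (hatt S₁ h₁).choose_spec
    obtain ⟨ha₂, hm₂, hn₂⟩ := (hatt S₂ h₂).choose_spec
    rw [Sym2.eq_iff] at heq
    rcases heq with ⟨e1, e2⟩ | ⟨e1, e2⟩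
    · rw [hSeq S₁ h₁ _ hm₁, hSeq S₂ h₂ _ hm₂, e1]
    · exact absurd (hmemX S₁ h₁ hm₁) (by rw [e1]; exact hn₂)
  have himg : f '' 𝒞 ⊆ cutBdry Θ X := by
    rintro e ⟨S, hS, rfl⟩
    rw [hf]; simp only [dif_pos hS]
    obtain ⟨ha, hm, hn⟩ := (hatt S hS).choose_spec
    exact mem_cutBdry_of_adj ha (hmemX S hS hm) hn
  have h𝒞fin : 𝒞.Finite := Set.Finite.of_finite_image (hfin.subset himg) hinj
  have hXfin : X.Finite := by
    have hsub : X ⊆ ⋃₀ 𝒞 := fun x hx => ⟨compSet Θ X x, ⟨x, hx, rfl⟩, self_mem_compSet⟩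
    exact (Set.Finite.sUnion h𝒞fin (by rintro S ⟨x, hx, rfl⟩; exact (hcon x hx))).subset hsub
  exact hX hXfin

/-- The tightening lemma: an infinite, co-infinite set with finite boundary contains
a tight cut with smaller boundary. -/
lemma tighten (hconn : Θ.Connected) (hX : X.Infinite) (hXc : Xᶜ.Infinite)
    (hfin : (cutBdry Θ X).Finite) :
    ∃ C : Set V, C.Infinite ∧ Cᶜ.Infinite ∧ ConnWithin Θ C ∧ ConnWithin Θ Cᶜ ∧
      cutBdry Θ C ⊆ cutBdry Θ X := by
  obtain ⟨x₀, hx₀, hX₀inf⟩ := exists_infinite_compSet hconn hX hfin hXc.nonempty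
  set X₀ := compSet Θ X x₀ with hX₀
  have hbd0 : cutBdry Θ X₀ ⊆ cutBdry Θ X := cutBdry_compSet_subset hx₀
  have hX₀c_inf : X₀ᶜ.Infinite := hXc.mono (compl_subset_compl.2 (compSet_subset hx₀))
  have hbd0c : cutBdry Θ X₀ᶜ = cutBdry Θ X₀ := cutBdry_compl
  have hX₀cc : (X₀ᶜ)ᶜ.Nonempty := by
    rw [compl_compl]; exact ⟨x₀, self_mem_compSet⟩
  obtain ⟨y₀, hy₀, hY₀inf⟩ := exists_infinite_compSet hconn hX₀c_inf
      (by rw [hbd0c]; exact hfin.subset hbd0) hX₀cc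
  set Y₀ := compSet Θ X₀ᶜ y₀ with hY₀
  have hbdY : cutBdry Θ Y₀ ⊆ cutBdry Θ X₀ := by
    rw [← hbd0c]; exact cutBdry_compSet_subset hy₀
  have hYsub : Y₀ ⊆ X₀ᶜ := compSet_subset hy₀
  have hX₀Y₀ : ∀ z ∈ X₀, z ∉ Y₀ := fun z hz hzY => hYsub hzY hz
  -- internal reachability of X₀ inside Θ − ∂Y₀
  have hX₀reach : ∀ ⦃a⦄, a ∈ X₀ → ∀ ⦃b⦄, b ∈ X₀ →
      (Θ.deleteEdges (cutBdry Θ Y₀)).Reachable a b := by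
    intro a ha b hb
    have hr : (Θ.deleteEdges (cutBdry Θ X)).Reachable a b := ha.symm.trans hb
    exact (reach_transfer (T := X₀)
      (fun a' b' hab hn ha' => Reachable.trans ha' (Adj.reachable (adj_del hab hn)))
      (fun a' b' _ _ ha' hb' =>
        not_mem_cutBdry_of_both_not (hX₀Y₀ _ ha') (hX₀Y₀ _ hb'))
      ha hr).2
  -- every vertex of Y₀ᶜ reaches X₀ in Θ − ∂Y₀
  have hkey : ∀ ⦃u⦄, u ∈ Y₀ᶜ → ∃ w ∈ X₀, (Θ.deleteEdges (cutBdry Θ Y₀)).Reachable u w := by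
    intro u hu
    by_cases huX₀ : u ∈ X₀
    · exact ⟨u, huX₀, Reachable.refl _⟩
    · have hu' : u ∈ X₀ᶜ := huX₀
      have huY : u ∉ Y₀ := hu
      have hTY : ∀ z ∈ compSet Θ X₀ᶜ u, z ∉ Y₀ := fun z hz hzY =>
        compSet_disjoint huY z hz hzY
      obtain ⟨a, b, hab, haT, hbX⟩ := attach hconn hu' hX₀cc
      have hbX₀ : b ∈ X₀ := by
        by_contra hb; exact hbX hb
      have hra : (Θ.deleteEdges (cutBdry Θ Y₀)).Reachable u a := by
        refine (reach_transfer (T := compSet Θ X₀ᶜ u)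
          (fun a' b' hab' hn ha' => Reachable.trans ha' (Adj.reachable (adj_del hab' hn)))
          (fun a' b' _ _ ha' hb' =>
            not_mem_cutBdry_of_both_not (hTY _ ha') (hTY _ hb'))
          self_mem_compSet haT).2
      have hedge : (Θ.deleteEdges (cutBdry Θ Y₀)).Adj a b :=
        adj_del hab (not_mem_cutBdry_of_both_not (hTY _ haT) (hX₀Y₀ _ hbX₀))
      exact ⟨b, hbX₀, hra.trans (Adj.reachable hedge)⟩
  refine ⟨Y₀ᶜ, hX₀inf.mono (fun z hz => hX₀Y₀ _ hz), ?_, ?_, ?_, ?_⟩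
  · rw [compl_compl]; exact hY₀inf
  · show ConnWithin Θ Y₀ᶜ
    intro u hu v hv
    rw [cutBdry_compl]
    obtain ⟨wu, hwu, hru⟩ := hkey hu
    obtain ⟨wv, hwv, hrv⟩ := hkey hv
    exact (hru.trans (hX₀reach hwu hwv)).trans hrv.symm
  · rw [compl_compl]
    exact connWithin_compSet hy₀
  · rw [cutBdry_compl]
    exact hbdY.trans hbd0

lemma isCut_of_tight (hconn : Θ.Connected) (hCinf : C.Infinite) (hCcinf : Cᶜ.Infinite)
    (hfin : (cutBdry Θ C).Finite) (hC : ConnWithin Θ C) (hCc : ConnWithin Θ Cᶜ) :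
    IsCut Θ C := by
  obtain ⟨x, hx⟩ := hCinf.nonempty
  obtain ⟨y, hy⟩ := hCcinf.nonempty
  have hGc : Θ.deleteEdges (cutBdry Θ Cᶜ) = Θ.deleteEdges (cutBdry Θ C) := by
    rw [cutBdry_compl]
  have hsuppx : ((Θ.deleteEdges (cutBdry Θ C)).connectedComponentMk x).supp = C := by
    ext z
    rw [ConnectedComponent.mem_supp_iff, ConnectedComponent.eq]
    constructor
    · intro h; exact mem_of_reach hx h.symm
    · intro hz; exact hC hz hx
  have hsuppy : ((Θ.deleteEdges (cutBdry Θ C)).connectedComponentMk y).supp = Cᶜ := by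
    ext z
    rw [ConnectedComponent.mem_supp_iff, ConnectedComponent.eq]
    constructor
    · intro h
      exact mem_of_reach (X := Cᶜ) hy (by rw [hGc]; exact h.symm)
    · intro hz
      have := hCc hz hy
      rw [hGc] at this; exact this
  have hKL : (Θ.deleteEdges (cutBdry Θ C)).connectedComponentMk x ≠
      (Θ.deleteEdges (cutBdry Θ C)).connectedComponentMk y := by
    intro h
    have hyC : y ∈ C := by
      rw [← hsuppx, h, ConnectedComponent.mem_supp_iff]
    exact hy hyC
  have hce : IsCuttingEdges Θ (cutBdry Θ C) := by
    refine ⟨hfin, cutBdry_subset_edgeSet, ?_, _, _, hKL, ?_, ?_⟩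
    · intro hcon
      exact hy (mem_of_reach hx (hcon.preconnected x y))
    · rw [hsuppx]; exact hCinf
    · rw [hsuppy]; exact hCcinf
  exact ⟨cutBdry Θ C, hce, _, by rw [hsuppx]; exact hCinf, hsuppx.symm⟩

lemma cutBdry_inter_subset : cutBdry Θ (C ∩ D) ⊆ cutBdry Θ C ∪ cutBdry Θ D := by
  rintro e ⟨he, u, v, rfl, hu, hv⟩
  by_cases hvC : v ∈ C
  · have hvD : v ∉ D := fun h => hv ⟨hvC, h⟩
    exact Or.inr ⟨he, u, v, rfl, hu.2, hvD⟩
  · exact Or.inl ⟨he, u, v, rfl, hu.1, hvC⟩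

lemma cutBdry_compl_inter_subset :
    cutBdry Θ (Cᶜ ∩ Dᶜ) ⊆ cutBdry Θ C ∪ cutBdry Θ D := by
  rintro e ⟨he, u, v, rfl, hu, hv⟩
  by_cases hvC : v ∈ C
  · exact Or.inl ⟨he, v, u, Sym2.eq_swap, hvC, hu.1⟩
  · have hvD : v ∈ D := by
      by_contra hvD
      exact hv ⟨hvC, hvD⟩
    exact Or.inr ⟨he, v, u, Sym2.eq_swap, hvD, hu.2⟩

lemma cutBdry_inter_inter_subset :
    cutBdry Θ (C ∩ D) ∩ cutBdry Θ (Cᶜ ∩ Dᶜ) ⊆ cutBdry Θ C ∩ cutBdry Θ D := by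
  rintro e ⟨⟨he, u, v, rfl, hu, hv⟩, h2⟩
  rcases endpoints_of_mem_cutBdry h2 with ⟨h3, -⟩ | ⟨h3, -⟩
  · exact absurd hu.1 h3.1
  · exact ⟨⟨he, u, v, rfl, hu.1, h3.1⟩, ⟨he, u, v, rfl, hu.2, h3.2⟩⟩

lemma submod (hC : (cutBdry Θ C).Finite) (hD : (cutBdry Θ D).Finite) :
    (cutBdry Θ (C ∩ D)).ncard + (cutBdry Θ (Cᶜ ∩ Dᶜ)).ncard ≤
      (cutBdry Θ C).ncard + (cutBdry Θ D).ncard := by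
  have hCD := hC.union hD
  have h1 : (cutBdry Θ (C ∩ D)).Finite := hCD.subset cutBdry_inter_subset
  have h2 : (cutBdry Θ (Cᶜ ∩ Dᶜ)).Finite := hCD.subset cutBdry_compl_inter_subset
  calc (cutBdry Θ (C ∩ D)).ncard + (cutBdry Θ (Cᶜ ∩ Dᶜ)).ncard
      = (cutBdry Θ (C ∩ D) ∪ cutBdry Θ (Cᶜ ∩ Dᶜ)).ncard +
        (cutBdry Θ (C ∩ D) ∩ cutBdry Θ (Cᶜ ∩ Dᶜ)).ncard :=
        (Set.ncard_union_add_ncard_inter _ _ h1 h2).symm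
    _ ≤ (cutBdry Θ C ∪ cutBdry Θ D).ncard + (cutBdry Θ C ∩ cutBdry Θ D).ncard :=
        add_le_add
          (Set.ncard_le_ncard (Set.union_subset cutBdry_inter_subset
            cutBdry_compl_inter_subset) hCD)
          (Set.ncard_le_ncard cutBdry_inter_inter_subset (hC.inter_of_left _))
    _ = (cutBdry Θ C).ncard + (cutBdry Θ D).ncard :=
        Set.ncard_union_add_ncard_inter _ _ hC hD

lemma cutBdry_deleteEdges {F : Set (Sym2 V)} :
    cutBdry (Θ.deleteEdges F) C = cutBdry Θ C \ F := by
  ext e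
  constructor
  · rintro ⟨he, u, v, rfl, hu, hv⟩
    rw [SimpleGraph.edgeSet_deleteEdges] at he
    exact ⟨⟨he.1, u, v, rfl, hu, hv⟩, he.2⟩
  · rintro ⟨⟨he, u, v, rfl, hu, hv⟩, hF⟩
    exact ⟨by rw [SimpleGraph.edgeSet_deleteEdges]; exact ⟨he, hF⟩, u, v, rfl, hu, hv⟩

lemma deleteEdges_mono_edges {F F' : Set (Sym2 V)} (h : F ⊆ F') :
    Θ.deleteEdges F' ≤ Θ.deleteEdges F := by
  intro a b hab
  rw [SimpleGraph.deleteEdges_adj] at hab ⊢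
  exact ⟨hab.1, fun hm => hab.2 (h hm)⟩

/-- Only finitely many "tight" cuts with boundary of size at most `m` separate
two given vertices. -/
lemma finiteSep : ∀ (m : ℕ) (Θ : SimpleGraph V), Θ.Connected → ∀ u v : V,
    {C : Set V | u ∈ C ∧ v ∉ C ∧ ConnWithin Θ C ∧ ConnWithin Θ Cᶜ ∧
      (cutBdry Θ C).Finite ∧ (cutBdry Θ C).ncard ≤ m}.Finite := by
  intro m
  induction m with
  | zero =>
    intro Θ hconn u v
    convert Set.finite_empty
    rw [Set.eq_empty_iff_forall_notMem]
    rintro C ⟨hu, hv, -, -, hfin, hcard⟩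
    obtain ⟨p⟩ := hconn.preconnected u v
    obtain ⟨d, -, h1, h2⟩ := exists_cross_dart p hu hv
    have : s(d.toProd.1, d.toProd.2) ∈ cutBdry Θ C := mem_cutBdry_of_adj d.adj h1 h2
    have hne : (cutBdry Θ C).Nonempty := ⟨_, this⟩
    rw [Nat.le_zero, Set.ncard_eq_zero hfin] at hcard
    rw [hcard] at hne
    exact Set.not_nonempty_empty hne
  | succ m ih =>
    intro Θ hconn u v
    classical
    obtain ⟨p⟩ := hconn.preconnected u v
    have cover : {C : Set V | u ∈ C ∧ v ∉ C ∧ ConnWithin Θ C ∧ ConnWithin Θ Cᶜ ∧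
        (cutBdry Θ C).Finite ∧ (cutBdry Θ C).ncard ≤ m + 1} ⊆
        ⋃ d ∈ p.darts.toFinset, {C : Set V | d.toProd.1 ∈ C ∧ d.toProd.2 ∉ C ∧
          ConnWithin Θ C ∧ ConnWithin Θ Cᶜ ∧
          (cutBdry Θ C).Finite ∧ (cutBdry Θ C).ncard ≤ m + 1} := by
      rintro C ⟨hu, hv, h3, h4, h5, h6⟩
      obtain ⟨d, hd, h1, h2⟩ := exists_cross_dart p hu hv
      exact Set.mem_biUnion (List.mem_toFinset.mpr hd) ⟨h1, h2, h3, h4, h5, h6⟩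
    refine Set.Finite.subset (Set.Finite.biUnion p.darts.toFinset.finite_toSet ?_) cover
    intro d _
    set x := d.toProd.1
    set y := d.toProd.2
    have hadj : Θ.Adj x y := d.adj
    set e := s(x, y) with he_def
    by_cases hcon' : (Θ.deleteEdges {e}).Connected
    · refine Set.Finite.subset (ih (Θ.deleteEdges {e}) hcon' x y) ?_
      rintro C ⟨hx, hy, hCW, hCWc, hfin, hcard⟩
      have he : e ∈ cutBdry Θ C := mem_cutBdry_of_adj hadj hx hy
      have hesub : {e} ⊆ cutBdry Θ C := Set.singleton_subset_iff.mpr he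
      have hgr : ∀ carg : Set V, cutBdry Θ carg = cutBdry Θ C →
          (Θ.deleteEdges {e}).deleteEdges (cutBdry (Θ.deleteEdges {e}) carg) =
            Θ.deleteEdges (cutBdry Θ carg) := by
        intro carg hcc
        rw [cutBdry_deleteEdges, SimpleGraph.deleteEdges_deleteEdges, hcc,
          Set.union_diff_cancel hesub]
      refine ⟨hx, hy, ?_, ?_, ?_, ?_⟩
      · intro a ha b hb
        rw [hgr C rfl]
        exact hCW ha hb
      · intro a ha b hb
        rw [hgr Cᶜ cutBdry_compl]
        exact hCWc ha hb
      · rw [cutBdry_deleteEdges]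
        exact hfin.diff
      · rw [cutBdry_deleteEdges]
        have hd1 : (cutBdry Θ C \ {e}).ncard = (cutBdry Θ C).ncard - 1 :=
          Set.ncard_diff_singleton_of_mem he
        omega
    · -- bridge case
      set A := {z | (Θ.deleteEdges {e}).Reachable x z} with hA
      set B := {z | (Θ.deleteEdges {e}).Reachable y z} with hB
      have hbr : ∀ {a c : V} (w : Θ.Walk a c),
          ((Θ.deleteEdges {e}).Reachable x a ∨ (Θ.deleteEdges {e}).Reachable y a) →
          ((Θ.deleteEdges {e}).Reachable x c ∨ (Θ.deleteEdges {e}).Reachable y c) := by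
        intro a c w
        induction w with
        | nil => exact id
        | @cons a b c hab q ihw =>
          intro hstart
          by_cases heq : s(a, b) = e
          · rw [he_def, Sym2.eq_iff] at heq
            rcases heq with ⟨rfl, rfl⟩ | ⟨rfl, rfl⟩
            · exact ihw (Or.inr (Reachable.refl _))
            · exact ihw (Or.inl (Reachable.refl _))
          · have hadj' : (Θ.deleteEdges {e}).Adj a b :=
              adj_del hab (by simpa using heq)
            rcases hstart with h | h
            · exact ihw (Or.inl (h.trans hadj'.reachable))
            · exact ihw (Or.inr (h.trans hadj'.reachable))
      have hAB : ∀ z, z ∈ A ∨ z ∈ B := by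
        intro z
        obtain ⟨w⟩ := hconn.preconnected x z
        exact hbr w (Or.inl (Reachable.refl _))
      have hdisj : ∀ z, z ∈ A → z ∈ B → False := by
        intro z hzA hzB
        apply hcon'
        have hxy : (Θ.deleteEdges {e}).Reachable x y := hzA.trans hzB.symm
        have hne : Nonempty V := ⟨x⟩
        refine ⟨?_⟩
        intro p' q'
        have key : ∀ w : V, (Θ.deleteEdges {e}).Reachable x w := by
          intro w
          rcases hAB w with h | h
          · exact h
          · exact hxy.trans h
        exact (key p').symm.trans (key q')
      refine Set.Finite.subset (Set.finite_singleton A) ?_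
      rintro C ⟨hx, hy, hCW, hCWc, hfin, -⟩
      have he : e ∈ cutBdry Θ C := mem_cutBdry_of_adj hadj hx hy
      have hmonoC : Θ.deleteEdges (cutBdry Θ C) ≤ Θ.deleteEdges {e} :=
        deleteEdges_mono_edges (Set.singleton_subset_iff.mpr he)
      have hsubA : C ⊆ A := by
        intro c hc
        exact Reachable.mono hmonoC (hCW hx hc)
      have hsubB : Cᶜ ⊆ B := by
        intro c hc
        have : (Θ.deleteEdges (cutBdry Θ Cᶜ)).Reachable y c := hCWc hy hc
        rw [cutBdry_compl] at this
        exact Reachable.mono hmonoC this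
      have : C = A := by
        apply Set.eq_of_subset_of_subset hsubA
        intro z hz
        by_contra hzC
        exact hdisj z hz (hsubB hzC)
      simp [this]

lemma walk_support_subset (hx : x ∈ X) (w : (Θ.deleteEdges (cutBdry Θ X)).Walk x y) :
    ∀ z ∈ w.support, z ∈ X := by
  induction w with
  | nil =>
    intro z hz
    rw [Walk.support_nil, List.mem_singleton] at hz
    rwa [hz]
  | @cons a b c hab q ihw =>
    intro z hz
    rw [SimpleGraph.deleteEdges_adj] at hab
    have hb : b ∈ X := step_lemma hab.1 hab.2 hx
    rw [Walk.support_cons, List.mem_cons] at hz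
    rcases hz with rfl | hz
    · exact hx
    · exact ihw hb z hz

section PLayer

variable (Θ) (P : Set (Sym2 V) → Prop)

def TightP (C : Set V) : Prop :=
  C.Infinite ∧ Cᶜ.Infinite ∧ ConnWithin Θ C ∧ ConnWithin Θ Cᶜ ∧
    (cutBdry Θ C).Finite ∧ P (cutBdry Θ C)

noncomputable def kVal : ℕ :=
  sInf {n | ∃ C : Set V, TightP Θ P C ∧ (cutBdry Θ C).ncard = n}

def NarrowP (C : Set V) : Prop :=
  TightP Θ P C ∧ (cutBdry Θ C).ncard = kVal Θ P

def Crossing (C D : Set V) : Prop :=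
  (C ∩ D).Nonempty ∧ (C ∩ Dᶜ).Nonempty ∧ (Cᶜ ∩ D).Nonempty ∧ (Cᶜ ∩ Dᶜ).Nonempty

def crossers (C : Set V) : Set (Set V) := {D | NarrowP Θ P D ∧ Crossing C D}

end PLayer

variable {P : Set (Sym2 V) → Prop}

lemma tightP_compl (h : TightP Θ P C) : TightP Θ P Cᶜ := by
  obtain ⟨h1, h2, h3, h4, h5, h6⟩ := h
  refine ⟨h2, by rwa [compl_compl], h4, by rwa [compl_compl], ?_, ?_⟩
  · rwa [cutBdry_compl]
  · rwa [cutBdry_compl]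

lemma narrowP_compl (h : NarrowP Θ P C) : NarrowP Θ P Cᶜ :=
  ⟨tightP_compl h.1, by rw [cutBdry_compl]; exact h.2⟩

lemma tightP_of_sub (hconn : Θ.Connected)
    (hsub : ∀ F F' : Set (Sym2 V), F.Finite → F' ⊆ F → P F → P F')
    (hX : X.Infinite) (hXc : Xᶜ.Infinite) (hfin : (cutBdry Θ X).Finite)
    (hP : P (cutBdry Θ X)) :
    ∃ C : Set V, TightP Θ P C ∧ cutBdry Θ C ⊆ cutBdry Θ X := by
  obtain ⟨C, h1, h2, h3, h4, h5⟩ := tighten hconn hX hXc hfin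
  exact ⟨C, ⟨h1, h2, h3, h4, hfin.subset h5, hsub _ _ hfin h5 hP⟩, h5⟩

lemma k_le (hconn : Θ.Connected)
    (hsub : ∀ F F' : Set (Sym2 V), F.Finite → F' ⊆ F → P F → P F')
    (hX : X.Infinite) (hXc : Xᶜ.Infinite) (hfin : (cutBdry Θ X).Finite)
    (hP : P (cutBdry Θ X)) :
    kVal Θ P ≤ (cutBdry Θ X).ncard := by
  obtain ⟨C, hC, hsubC⟩ := tightP_of_sub hconn hsub hX hXc hfin hP
  exact le_trans (Nat.sInf_le ⟨C, hC, rfl⟩) (Set.ncard_le_ncard hsubC hfin)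

lemma empty_dest {S T : Set V} (h : S ∩ T = ∅) {z : V} (hS : z ∈ S) (hT : z ∈ T) : False :=
  Set.eq_empty_iff_forall_notMem.mp h z ⟨hS, hT⟩

lemma not_crossing_iff :
    ¬Crossing C D ↔ (C ∩ D = ∅ ∨ C ∩ Dᶜ = ∅ ∨ Cᶜ ∩ D = ∅ ∨ Cᶜ ∩ Dᶜ = ∅) := by
  rw [Crossing, not_and_or, not_and_or, not_and_or]
  simp [Set.not_nonempty_iff_eq_empty]

lemma crossing_symm (h : Crossing C D) : Crossing D C := by
  obtain ⟨a, b, c, d⟩ := h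
  exact ⟨by rwa [Set.inter_comm], by rwa [Set.inter_comm],
    by rwa [Set.inter_comm], by rwa [Set.inter_comm]⟩

lemma crossing_compl_right : Crossing C Dᶜ ↔ Crossing C D := by
  unfold Crossing
  rw [compl_compl]
  tauto

lemma crossing_compl_left : Crossing Cᶜ D ↔ Crossing C D := by
  unfold Crossing
  rw [compl_compl]
  tauto

lemma crossing_self_false (h : Crossing C C) : False := by
  obtain ⟨-, h2, -, -⟩ := h
  rw [Set.inter_compl_self] at h2
  exact Set.not_nonempty_empty h2

/-- A narrow cut crossing a corner must cross one of the two original cuts. -/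
lemma cross_cover {E : Set V} (hBne : (Cᶜ ∩ Dᶜ).Nonempty) (hcrA : Crossing (C ∩ D) E) :
    Crossing C E ∨ Crossing D E := by
  by_contra hcon
  push_neg at hcon
  obtain ⟨hz₀C, hz₀D⟩ := hBne.choose_spec
  set z₀ := hBne.choose
  rcases not_crossing_iff.mp hcon.1 with c1 | c2 | c3 | c4
  · obtain ⟨z, hzA, hzE⟩ := hcrA.1
    exact empty_dest c1 hzA.1 hzE
  · obtain ⟨z, hzA, hzE⟩ := hcrA.2.1
    exact empty_dest c2 hzA.1 hzE
  all_goals rcases not_crossing_iff.mp hcon.2 with d1 | d2 | d3 | d4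
  -- c3 : Cᶜ ∩ E = ∅ (E ⊆ C)
  · obtain ⟨z, hzA, hzE⟩ := hcrA.1
    exact empty_dest d1 hzA.2 hzE
  · obtain ⟨z, hzA, hzE⟩ := hcrA.2.1
    exact empty_dest d2 hzA.2 hzE
  · -- c3, d3 : E ⊆ C and E ⊆ D
    obtain ⟨z, hzA, hzE⟩ := hcrA.2.2.1
    have hzC : z ∈ C := by
      by_contra h; exact empty_dest c3 h hzE
    have hzD : z ∈ D := by
      by_contra h; exact empty_dest d3 h hzE
    exact hzA ⟨hzC, hzD⟩
  · -- c3, d4 : E ⊆ C and Dᶜ ⊆ E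
    have hz₀E : z₀ ∈ E := by
      by_contra h; exact empty_dest d4 hz₀D h
    exact empty_dest c3 hz₀C hz₀E
  -- c4 : Cᶜ ∩ Eᶜ = ∅ (Cᶜ ⊆ E)
  · obtain ⟨z, hzA, hzE⟩ := hcrA.1
    exact empty_dest d1 hzA.2 hzE
  · obtain ⟨z, hzA, hzE⟩ := hcrA.2.1
    exact empty_dest d2 hzA.2 hzE
  · -- c4, d3 : Cᶜ ⊆ E and E ⊆ D
    have hz₀E : z₀ ∈ E := by
      by_contra h; exact empty_dest c4 hz₀C h
    exact empty_dest d3 hz₀D hz₀E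
  · -- c4, d4 : Cᶜ ⊆ E and Dᶜ ⊆ E
    obtain ⟨z, hzA, hzE⟩ := hcrA.2.2.2
    rcases (Set.mem_compl_iff _ _).mp hzA, Classical.em (z ∈ C) with ⟨hzA', hC'⟩
    rcases hC' with hzC | hzC
    · have hzD : z ∉ D := fun hzD => hzA ⟨hzC, hzD⟩
      exact empty_dest d4 hzD hzE
    · exact empty_dest c4 hzC hzE

/-- A cut crossing two opposite corners crosses both original cuts. -/
lemma cross_both {E : Set V} (hcrA : Crossing (C ∩ D) E) (hcrB : Crossing (Cᶜ ∩ Dᶜ) E) :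
    Crossing C E ∧ Crossing D E := by
  constructor
  · by_contra hcon
    rcases not_crossing_iff.mp hcon with c1 | c2 | c3 | c4
    · obtain ⟨z, hzA, hzE⟩ := hcrA.1
      exact empty_dest c1 hzA.1 hzE
    · obtain ⟨z, hzA, hzE⟩ := hcrA.2.1
      exact empty_dest c2 hzA.1 hzE
    · obtain ⟨z, hzB, hzE⟩ := hcrB.1
      exact empty_dest c3 hzB.1 hzE
    · obtain ⟨z, hzB, hzE⟩ := hcrB.2.1
      exact empty_dest c4 hzB.1 hzE
  · by_contra hcon
    rcases not_crossing_iff.mp hcon with d1 | d2 | d3 | d4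
    · obtain ⟨z, hzA, hzE⟩ := hcrA.1
      exact empty_dest d1 hzA.2 hzE
    · obtain ⟨z, hzA, hzE⟩ := hcrA.2.1
      exact empty_dest d2 hzA.2 hzE
    · obtain ⟨z, hzB, hzE⟩ := hcrB.1
      exact empty_dest d3 hzB.2 hzE
    · obtain ⟨z, hzB, hzE⟩ := hcrB.2.1
      exact empty_dest d4 hzB.2 hzE

/-- Corner lemma: the corner `C ∩ D` of two crossing narrow cuts with
`C ∩ D`, `Cᶜ ∩ Dᶜ` infinite is itself narrow. -/
lemma corner_narrow (hconn : Θ.Connected)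
    (hsub : ∀ F F' : Set (Sym2 V), F.Finite → F' ⊆ F → P F → P F')
    (hunion : ∀ F F' : Set (Sym2 V), F.Finite → F'.Finite → P F → P F' → P (F ∪ F'))
    (hC : NarrowP Θ P C) (hD : NarrowP Θ P D)
    (hA : (C ∩ D).Infinite) (hB : (Cᶜ ∩ Dᶜ).Infinite) :
    NarrowP Θ P (C ∩ D) := by
  obtain ⟨⟨hCinf, hCcinf, hCW, hCWc, hCfin, hCP⟩, hCk⟩ := hC
  obtain ⟨⟨hDinf, hDcinf, hDW, hDWc, hDfin, hDP⟩, hDk⟩ := hD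
  have hfinU : (cutBdry Θ C ∪ cutBdry Θ D).Finite := hCfin.union hDfin
  have hPU : P (cutBdry Θ C ∪ cutBdry Θ D) := hunion _ _ hCfin hDfin hCP hDP
  have hAc_inf : (C ∩ D)ᶜ.Infinite := by
    refine hB.mono ?_
    intro z hz hzA
    exact hz.1 hzA.1
  have hBc_inf : (Cᶜ ∩ Dᶜ)ᶜ.Infinite := by
    refine hA.mono ?_
    intro z hz hzB
    exact hzB.1 hz.1
  have hfinA : (cutBdry Θ (C ∩ D)).Finite := hfinU.subset cutBdry_inter_subset
  have hPA : P (cutBdry Θ (C ∩ D)) := hsub _ _ hfinU cutBdry_inter_subset hPU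
  have hfinB : (cutBdry Θ (Cᶜ ∩ Dᶜ)).Finite := hfinU.subset cutBdry_compl_inter_subset
  have hPB : P (cutBdry Θ (Cᶜ ∩ Dᶜ)) := hsub _ _ hfinU cutBdry_compl_inter_subset hPU
  have hkA : kVal Θ P ≤ (cutBdry Θ (C ∩ D)).ncard :=
    k_le hconn hsub hA hAc_inf hfinA hPA
  have hkB : kVal Θ P ≤ (cutBdry Θ (Cᶜ ∩ Dᶜ)).ncard :=
    k_le hconn hsub hB hBc_inf hfinB hPB
  have hsum := submod hCfin hDfin (C := C) (D := D)
  rw [hCk, hDk] at hsum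
  have hcardA : (cutBdry Θ (C ∩ D)).ncard = kVal Θ P := by omega
  -- connectivity of the corner
  refine ⟨⟨hA, hAc_inf, ?_, ?_, hfinA, hPA⟩, hcardA⟩
  · -- ConnWithin Θ (C ∩ D)
    obtain ⟨x, hxA, hxinf⟩ := exists_infinite_compSet hconn hA hfinA hAc_inf.nonempty
    have hall : ∀ z ∈ C ∩ D, z ∈ compSet Θ (C ∩ D) x := by
      intro z hz
      by_contra hzT
      have hTbd : cutBdry Θ (compSet Θ (C ∩ D) x) ⊆ cutBdry Θ (C ∩ D) :=
        cutBdry_compSet_subset hxA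
      have hT'bd : cutBdry Θ (compSet Θ (C ∩ D) z) ⊆ cutBdry Θ (C ∩ D) :=
        cutBdry_compSet_subset hz
      have hTc_inf : (compSet Θ (C ∩ D) x)ᶜ.Infinite :=
        hAc_inf.mono (compl_subset_compl.2 (compSet_subset hxA))
      have hkT : kVal Θ P ≤ (cutBdry Θ (compSet Θ (C ∩ D) x)).ncard :=
        k_le hconn hsub hxinf hTc_inf (hfinA.subset hTbd) (hsub _ _ hfinA hTbd hPA)
      obtain ⟨a, b, hab, haT', hbA⟩ := attach hconn hz hAc_inf.nonempty
      have hbT' : b ∉ compSet Θ (C ∩ D) z := fun h => hbA (compSet_subset hz h)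
      have heT' : s(a, b) ∈ cutBdry Θ (compSet Θ (C ∩ D) z) :=
        mem_cutBdry_of_adj hab haT' hbT'
      have hdisjTT' : ∀ w, w ∈ compSet Θ (C ∩ D) z → w ∈ compSet Θ (C ∩ D) x → False :=
        compSet_disjoint hzT
      have hdisj : Disjoint (cutBdry Θ (compSet Θ (C ∩ D) x))
          (cutBdry Θ (compSet Θ (C ∩ D) z)) := by
        rw [Set.disjoint_left]
        rintro e ⟨he, u, v, rfl, huT, hvT⟩ heT2
        rcases endpoints_of_mem_cutBdry heT2 with ⟨h1, -⟩ | ⟨h1, -⟩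
        · exact hdisjTT' u h1 huT
        · -- v ∈ T'
          rcases endpoints_of_mem_cutBdry (hTbd ⟨he, u, v, rfl, huT, hvT⟩)
            with ⟨-, h3⟩ | ⟨-, h3⟩
          · exact h3 (compSet_subset hz h1)
          · exact h3 (compSet_subset hxA huT)
      have hcount : (cutBdry Θ (compSet Θ (C ∩ D) x)).ncard +
          (cutBdry Θ (compSet Θ (C ∩ D) z)).ncard ≤ (cutBdry Θ (C ∩ D)).ncard := by
        rw [← Set.ncard_union_eq hdisj (hfinA.subset hTbd) (hfinA.subset hT'bd)]
        exact Set.ncard_le_ncard (Set.union_subset hTbd hT'bd) hfinA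
      have hpos : 0 < (cutBdry Θ (compSet Θ (C ∩ D) z)).ncard := by
        rw [Set.ncard_pos (hfinA.subset hT'bd)]
        exact ⟨_, heT'⟩
      omega
    intro p hp q hq
    exact ((hall p hp).symm.trans (hall q hq))
  · -- ConnWithin Θ (C ∩ D)ᶜ
    rw [Set.compl_inter]
    exact connWithin_union hCWc hDWc hB.nonempty

lemma sym2_endpoints_finite (e : Sym2 V) : {a : V | a ∈ e}.Finite := by
  induction e with
  | _ u v =>
    have : {a : V | a ∈ s(u, v)} = {u, v} := by
      ext a; simp [Sym2.mem_iff]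
    rw [this]
    exact (Set.finite_singleton v).insert u

/-- Each narrow cut is crossed by only finitely many narrow cuts. -/
lemma crossers_finite (hconn : Θ.Connected) (hC : NarrowP Θ P C) :
    (crossers Θ P C).Finite := by
  classical
  set W : Set V := ⋃ e ∈ cutBdry Θ C, {a : V | a ∈ e} with hW
  have hWfin : W.Finite := Set.Finite.biUnion hC.1.2.2.2.2.1 fun e _ => sym2_endpoints_finite e
  have hcover : crossers Θ P C ⊆
      ⋃ a ∈ W, ⋃ b ∈ W, {D : Set V | a ∈ D ∧ b ∉ D ∧ ConnWithin Θ D ∧ ConnWithin Θ Dᶜ ∧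
        (cutBdry Θ D).Finite ∧ (cutBdry Θ D).ncard ≤ kVal Θ P} := by
    rintro D ⟨hND, hcr⟩
    obtain ⟨⟨hDinf, hDcinf, hDW, hDWc, hDfin, hDP⟩, hDk⟩ := hND
    -- find a boundary-vertex of C inside D
    obtain ⟨p, hpC, hpD⟩ := hcr.1
    obtain ⟨q, hqCc, hqD⟩ := hcr.2.2.1
    obtain ⟨w⟩ := hDW hpD hqD
    obtain ⟨d, hd, h1, h2⟩ := exists_cross_dart (T := C) w hpC hqCc
    have hdadj := d.adj
    rw [SimpleGraph.deleteEdges_adj] at hdadj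
    have haD : d.toProd.1 ∈ D :=
      walk_support_subset hpD w _ (Walk.dart_fst_mem_support_of_mem_darts w hd)
    have haW : d.toProd.1 ∈ W := by
      exact Set.mem_biUnion (mem_cutBdry_of_adj hdadj.1 h1 h2)
        (Sym2.mem_mk_left _ _)
    -- find a boundary-vertex of C inside Dᶜ
    obtain ⟨p', hp'C, hp'D⟩ := hcr.2.1
    obtain ⟨q', hq'Cc, hq'D⟩ := hcr.2.2.2
    obtain ⟨w'⟩ := hDWc hp'D hq'D
    obtain ⟨d', hd', h1', h2'⟩ := exists_cross_dart (T := C) w' hp'C hq'Cc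
    have hd'adj := d'.adj
    rw [SimpleGraph.deleteEdges_adj] at hd'adj
    have hbD : d'.toProd.1 ∈ Dᶜ :=
      walk_support_subset (X := Dᶜ) hp'D w' _ (Walk.dart_fst_mem_support_of_mem_darts w' hd')
    have hbW : d'.toProd.1 ∈ W := by
      exact Set.mem_biUnion (mem_cutBdry_of_adj hd'adj.1 h1' h2')
        (Sym2.mem_mk_left _ _)
    refine Set.mem_biUnion haW (Set.mem_biUnion hbW ?_)
    exact ⟨haD, hbD, hDW, hDWc, hDfin, le_of_eq hDk⟩
  refine Set.Finite.subset (Set.Finite.biUnion hWfin fun a _ =>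
    Set.Finite.biUnion hWfin fun b _ => ?_) hcover
  exact finiteSep (kVal Θ P) Θ hconn a b

/-- The central counting contradiction. -/
lemma main_contra (hconn : Θ.Connected)
    (hsub : ∀ F F' : Set (Sym2 V), F.Finite → F' ⊆ F → P F → P F')
    (hunion : ∀ F F' : Set (Sym2 V), F.Finite → F'.Finite → P F → P F' → P (F ∪ F'))
    (hC : NarrowP Θ P C) (hD : NarrowP Θ P D) (hcr : Crossing C D)
    (hA : (C ∩ D).Infinite) (hB : (Cᶜ ∩ Dᶜ).Infinite)
    (hmin : ∀ E, NarrowP Θ P E → (crossers Θ P C).ncard ≤ (crossers Θ P E).ncard)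
    (hCD : (crossers Θ P D).ncard = (crossers Θ P C).ncard) : False := by
  have hNA : NarrowP Θ P (C ∩ D) := corner_narrow hconn hsub hunion hC hD hA hB
  have hNB : NarrowP Θ P (Cᶜ ∩ Dᶜ) := by
    refine corner_narrow hconn hsub hunion (narrowP_compl hC) (narrowP_compl hD) hB ?_
    rw [compl_compl, compl_compl]
    exact hA
  have hfinXA := crossers_finite hconn hNA
  have hfinXB := crossers_finite hconn hNB
  have hfinXC := crossers_finite hconn hC
  have hfinXD := crossers_finite hconn hD
  have hCnotA : C ∉ crossers Θ P (C ∩ D) := by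
    rintro ⟨-, hx⟩
    obtain ⟨z, hz1, hz2⟩ := hx.2.1
    exact hz2 hz1.1
  have hDnotA : D ∉ crossers Θ P (C ∩ D) := by
    rintro ⟨-, hx⟩
    obtain ⟨z, hz1, hz2⟩ := hx.2.1
    exact hz2 hz1.2
  have hCnotB : C ∉ crossers Θ P (Cᶜ ∩ Dᶜ) := by
    rintro ⟨-, hx⟩
    obtain ⟨z, hz1, hz2⟩ := hx.1
    exact hz1.1 hz2
  have hDnotB : D ∉ crossers Θ P (Cᶜ ∩ Dᶜ) := by
    rintro ⟨-, hx⟩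
    obtain ⟨z, hz1, hz2⟩ := hx.1
    exact hz1.2 hz2
  have hsub_un : crossers Θ P (C ∩ D) ∪ crossers Θ P (Cᶜ ∩ Dᶜ) ⊆
      crossers Θ P C ∪ crossers Θ P D := by
    rintro E (⟨hNE, hcrE⟩ | ⟨hNE, hcrE⟩)
    · rcases cross_cover hB.nonempty hcrE with h | h
      · exact Or.inl ⟨hNE, h⟩
      · exact Or.inr ⟨hNE, h⟩
    · have hAne : ((Cᶜ)ᶜ ∩ (Dᶜ)ᶜ).Nonempty := by
        rw [compl_compl, compl_compl]
        exact hA.nonempty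
      rcases cross_cover hAne hcrE with h | h
      · exact Or.inl ⟨hNE, crossing_compl_left.mp h⟩
      · exact Or.inr ⟨hNE, crossing_compl_left.mp h⟩
  have hsub_in : crossers Θ P (C ∩ D) ∩ crossers Θ P (Cᶜ ∩ Dᶜ) ⊆
      crossers Θ P C ∩ crossers Θ P D := by
    rintro E ⟨⟨hNE, h1⟩, ⟨-, h2⟩⟩
    obtain ⟨hc, hd⟩ := cross_both h1 h2
    exact ⟨⟨hNE, hc⟩, ⟨hNE, hd⟩⟩
  have hCinXD : C ∈ crossers Θ P D := ⟨hC, crossing_symm hcr⟩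
  have hDinXC : D ∈ crossers Θ P C := ⟨hD, hcr⟩
  have hCDne : C ≠ D := fun h => crossing_self_false (h ▸ hcr)
  have hdisj : Disjoint (crossers Θ P (C ∩ D) ∪ crossers Θ P (Cᶜ ∩ Dᶜ)) {C, D} := by
    rw [Set.disjoint_right]
    rintro z (rfl | rfl)
    · rintro (h | h)
      · exact hCnotA h
      · exact hCnotB h
    · rintro (h | h)
      · exact hDnotA h
      · exact hDnotB h
  have hcount1 : (crossers Θ P (C ∩ D) ∪ crossers Θ P (Cᶜ ∩ Dᶜ)).ncard + 2 ≤
      (crossers Θ P C ∪ crossers Θ P D).ncard := by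
    have hsub2 : (crossers Θ P (C ∩ D) ∪ crossers Θ P (Cᶜ ∩ Dᶜ)) ∪ {C, D} ⊆
        crossers Θ P C ∪ crossers Θ P D := by
      refine Set.union_subset hsub_un ?_
      rintro z (rfl | rfl)
      · exact Or.inr hCinXD
      · exact Or.inl hDinXC
    have hpairfin : ({C, D} : Set (Set V)).Finite :=
      (Set.finite_singleton D).insert C
    have := Set.ncard_union_eq hdisj (hfinXA.union hfinXB) hpairfin
    rw [Set.ncard_pair hCDne] at this
    rw [← this]
    exact Set.ncard_le_ncard hsub2 (hfinXC.union hfinXD)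
  have hcount2 : (crossers Θ P (C ∩ D) ∩ crossers Θ P (Cᶜ ∩ Dᶜ)).ncard ≤
      (crossers Θ P C ∩ crossers Θ P D).ncard :=
    Set.ncard_le_ncard hsub_in (hfinXC.inter_of_left _)
  have heq1 := Set.ncard_union_add_ncard_inter (crossers Θ P (C ∩ D))
    (crossers Θ P (Cᶜ ∩ Dᶜ)) hfinXA hfinXB
  have heq2 := Set.ncard_union_add_ncard_inter (crossers Θ P C)
    (crossers Θ P D) hfinXC hfinXD
  have hm1 := hmin _ hNA
  have hm2 := hmin _ hNB
  omega

/-- Good pair of opposite corners. -/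
lemma good_pair (hcr : Crossing C D) (hCinf : C.Infinite) (hCcinf : Cᶜ.Infinite)
    (hDinf : D.Infinite) (hDcinf : Dᶜ.Infinite) :
    ((C ∩ D).Infinite ∧ (Cᶜ ∩ Dᶜ).Infinite) ∨
      ((C ∩ Dᶜ).Infinite ∧ (Cᶜ ∩ D).Infinite) := by
  by_cases h1 : (C ∩ D).Infinite
  · by_cases h2 : (Cᶜ ∩ Dᶜ).Infinite
    · exact Or.inl ⟨h1, h2⟩
    · rw [Set.not_infinite] at h2
      refine Or.inr ⟨?_, ?_⟩
      · intro hfin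
        apply hDcinf
        have : Dᶜ = (C ∩ Dᶜ) ∪ (Cᶜ ∩ Dᶜ) := by
          ext z; by_cases hz : z ∈ C <;> simp [hz]
        rw [this]
        exact hfin.union h2
      · intro hfin
        apply hCcinf
        have : Cᶜ = (Cᶜ ∩ D) ∪ (Cᶜ ∩ Dᶜ) := by
          ext z; by_cases hz : z ∈ D <;> simp [hz]
        rw [this]
        exact hfin.union h2
  · rw [Set.not_infinite] at h1
    refine Or.inr ⟨?_, ?_⟩
    · intro hfin
      apply hCinf
      have : C = (C ∩ D) ∪ (C ∩ Dᶜ) := by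
        ext z; by_cases hz : z ∈ D <;> simp [hz]
      rw [this]
      exact h1.union hfin
    · intro hfin
      apply hDinf
      have : D = (C ∩ D) ∪ (Cᶜ ∩ D) := by
        ext z; by_cases hz : z ∈ C <;> simp [hz]
      rw [this]
      exact h1.union hfin

lemma crossers_compl : crossers Θ P Dᶜ = crossers Θ P D := by
  ext E
  unfold crossers
  rw [Set.mem_setOf_eq, Set.mem_setOf_eq, crossing_compl_left]

section Equivariance

variable {φ : V → V}

lemma edge_image (hadj : ∀ u v, Θ.Adj (φ u) (φ v) ↔ Θ.Adj u v) {u v : V} :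
    s(φ u, φ v) ∈ Θ.edgeSet ↔ s(u, v) ∈ Θ.edgeSet := by
  rw [SimpleGraph.mem_edgeSet, SimpleGraph.mem_edgeSet, hadj]

lemma cutBdry_image (hbij : Function.Bijective φ)
    (hadj : ∀ u v, Θ.Adj (φ u) (φ v) ↔ Θ.Adj u v) :
    cutBdry Θ (φ '' C) = Sym2.map φ '' cutBdry Θ C := by
  ext e
  constructor
  · rintro ⟨he, u, v, rfl, hu, hv⟩
    obtain ⟨u₀, rfl⟩ := hbij.surjective u
    obtain ⟨v₀, rfl⟩ := hbij.surjective v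
    have hu₀ : u₀ ∈ C := by
      obtain ⟨c, hc, hcu⟩ := hu
      rwa [← hbij.injective hcu]
    have hv₀ : v₀ ∉ C := fun h => hv ⟨v₀, h, rfl⟩
    refine ⟨s(u₀, v₀), ⟨(edge_image hadj).mp he, u₀, v₀, rfl, hu₀, hv₀⟩, ?_⟩
    rw [Sym2.map_pair_eq]
  · rintro ⟨f, ⟨he, u, v, rfl, hu, hv⟩, rfl⟩
    rw [Sym2.map_pair_eq]
    refine ⟨(edge_image hadj).mpr he, φ u, φ v, rfl, ⟨u, hu, rfl⟩, ?_⟩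
    rintro ⟨c, hc, hcu⟩
    rw [hbij.injective hcu] at hc
    exact hv hc

lemma reach_map (hbij : Function.Bijective φ)
    (hadj : ∀ u v, Θ.Adj (φ u) (φ v) ↔ Θ.Adj u v) {F : Set (Sym2 V)}
    (h : (Θ.deleteEdges F).Reachable x y) :
    (Θ.deleteEdges (Sym2.map φ '' F)).Reachable (φ x) (φ y) := by
  obtain ⟨w⟩ := h
  induction w with
  | nil => exact Reachable.refl _
  | @cons a b c hab q ihw =>
    rw [SimpleGraph.deleteEdges_adj] at hab
    refine Reachable.trans (Adj.reachable (adj_del ((hadj a b).mpr hab.1) ?_)) ihw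
    rintro ⟨f, hf, hfeq⟩
    rw [← Sym2.map_pair_eq] at hfeq
    rw [Sym2.map.injective hbij.injective hfeq] at hf
    exact hab.2 hf

lemma connWithin_image (hbij : Function.Bijective φ)
    (hadj : ∀ u v, Θ.Adj (φ u) (φ v) ↔ Θ.Adj u v) (h : ConnWithin Θ C) :
    ConnWithin Θ (φ '' C) := by
  rintro x' ⟨x, hx, rfl⟩ y' ⟨y, hy, rfl⟩
  rw [cutBdry_image hbij hadj]
  exact reach_map hbij hadj (h hx hy)

lemma crossing_image (hbij : Function.Bijective φ) (h : Crossing C D) :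
    Crossing (φ '' C) (φ '' D) := by
  obtain ⟨h1, h2, h3, h4⟩ := h
  refine ⟨?_, ?_, ?_, ?_⟩
  · rw [← Set.image_inter hbij.injective]
    exact h1.image _
  · rw [← Set.image_compl_eq hbij, ← Set.image_inter hbij.injective]
    exact h2.image _
  · rw [← Set.image_compl_eq hbij, ← Set.image_inter hbij.injective]
    exact h3.image _
  · rw [← Set.image_compl_eq hbij, ← Set.image_compl_eq hbij,
      ← Set.image_inter hbij.injective]
    exact h4.image _

end Equivariance

end KroenAux


/-- (Krön; Theorem 2.4 of Hensel–Kielak.)  Let `Θ` be a connected graph with a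
group `G` acting on it, and let `P` be a property of finite sets of edges which
is stable under the `G`-action, under subsets and under finite unions.  If some
set of cutting edges has `P`, then there is a cut `C` whose boundary has `P`,
which is nested with all its `G`-translates, and whose complement is also a
cut. -/
theorem kroen_equivariant_nested_cut
    {V : Type*} (Θ : SimpleGraph V) (hconn : Θ.Connected)
    {G : Type*} [Group G] [MulAction G V]
    -- `G` acts on `Θ` by graph automorphisms
    (hact : ∀ (g : G) (u v : V), Θ.Adj (g • u) (g • v) ↔ Θ.Adj u v)
    (P : Set (Sym2 V) → Prop)
    -- `P` is stable under the `G`-action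
    (hPact : ∀ (g : G) (F : Set (Sym2 V)), F.Finite → P F →
      P (Sym2.map (fun x => g • x) '' F))
    -- `P` is stable under subsets
    (hsub : ∀ F F' : Set (Sym2 V), F.Finite → F' ⊆ F → P F → P F')
    -- `P` is stable under finite unions
    (hunion : ∀ F F' : Set (Sym2 V), F.Finite → F'.Finite → P F → P F' → P (F ∪ F'))
    -- some set of cutting edges has `P`
    (hex : ∃ F : Set (Sym2 V), IsCuttingEdges Θ F ∧ P F) :
    ∃ C : Set V, IsCut Θ C ∧ P (cutBdry Θ C) ∧
      (∀ g : G, Nested C ((fun x => g • x) '' C)) ∧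
      IsCut Θ Cᶜ := by
  classical
  obtain ⟨F, ⟨hFfin, hFsub, hFdisc, K, L, hKL, hKinf, hLinf⟩, hPF⟩ := hex
  -- an initial tight P-cut obtained from F
  have hbdK : cutBdry Θ K.supp ⊆ F := by
    rintro e ⟨he, u, v, rfl, hu, hv⟩
    by_contra hne
    apply hv
    rw [SimpleGraph.ConnectedComponent.mem_supp_iff] at hu ⊢
    rw [← hu]
    exact (SimpleGraph.ConnectedComponent.eq.mpr
      (KroenAux.adj_del ((Θ.mem_edgeSet).1 he) hne).reachable).symm
  have hKcinf : (K.supp)ᶜ.Infinite := by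
    refine hLinf.mono ?_
    intro z hz hzK
    rw [SimpleGraph.ConnectedComponent.mem_supp_iff] at hz hzK
    exact hKL (hzK ▸ hz)
  have hfinK := hFfin.subset hbdK
  have hPK : P (cutBdry Θ K.supp) := hsub F _ hFfin hbdK hPF
  obtain ⟨C₁, hC₁, -⟩ := KroenAux.tightP_of_sub hconn hsub hKinf hKcinf hfinK hPK
  have hkne : {n | ∃ C, KroenAux.TightP Θ P C ∧ (cutBdry Θ C).ncard = n}.Nonempty :=
    ⟨_, C₁, hC₁, rfl⟩
  obtain ⟨C₂, hC₂T, hC₂k⟩ := Nat.sInf_mem hkne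
  have hN₂ : KroenAux.NarrowP Θ P C₂ := ⟨hC₂T, hC₂k⟩
  have hmne : {n | ∃ C, KroenAux.NarrowP Θ P C ∧
      (KroenAux.crossers Θ P C).ncard = n}.Nonempty := ⟨_, C₂, hN₂, rfl⟩
  obtain ⟨C₀, hN₀, hμ₀⟩ := Nat.sInf_mem hmne
  have hminP : ∀ E, KroenAux.NarrowP Θ P E →
      (KroenAux.crossers Θ P C₀).ncard ≤ (KroenAux.crossers Θ P E).ncard := by
    intro E hE
    rw [hμ₀]
    exact Nat.sInf_le ⟨E, hE, rfl⟩
  obtain ⟨hC₀inf, hC₀cinf, hC₀W, hC₀Wc, hC₀fin, hC₀P⟩ := hN₀.1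
  have hbij : ∀ g : G, Function.Bijective (fun x : V => g • x) :=
    fun g => MulAction.bijective g
  have hNimg : ∀ (g : G) (C : Set V), KroenAux.NarrowP Θ P C →
      KroenAux.NarrowP Θ P ((fun x => g • x) '' C) := by
    intro g C hN
    obtain ⟨⟨h1, h2, h3, h4, h5, h6⟩, h7⟩ := hN
    have hbd := KroenAux.cutBdry_image (Θ := Θ) (C := C) (hbij g) (hact g)
    refine ⟨⟨h1.image (Set.injOn_of_injective (hbij g).injective),
      ?_, KroenAux.connWithin_image (hbij g) (hact g) h3, ?_, ?_, ?_⟩, ?_⟩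
    · rw [← Set.image_compl_eq (hbij g)]
      exact h2.image (Set.injOn_of_injective (hbij g).injective)
    · rw [← Set.image_compl_eq (hbij g)]
      exact KroenAux.connWithin_image (hbij g) (hact g) h4
    · rw [hbd]; exact h5.image _
    · rw [hbd]; exact hPact g _ h5 h6
    · rw [hbd, Set.ncard_image_of_injective _ (Sym2.map.injective (hbij g).injective)]
      exact h7
  have hinv1 : ∀ (g : G) (S : Set V),
      (fun x : V => g • x) '' ((fun x : V => g⁻¹ • x) '' S) = S := by
    intro g S
    rw [Set.image_image]
    simp
  have hinv2 : ∀ (g : G) (S : Set V),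
      (fun x : V => g⁻¹ • x) '' ((fun x : V => g • x) '' S) = S := by
    intro g S
    rw [Set.image_image]
    simp
  have hXimg : ∀ (g : G) (C : Set V),
      KroenAux.crossers Θ P ((fun x => g • x) '' C) =
        (Set.image (fun x : V => g • x)) '' KroenAux.crossers Θ P C := by
    intro g C
    ext D
    constructor
    · rintro ⟨hND, hcrD⟩
      refine ⟨(fun x : V => g⁻¹ • x) '' D, ⟨hNimg g⁻¹ D hND, ?_⟩, hinv1 g D⟩
      have := KroenAux.crossing_image (hbij g⁻¹) hcrD
      rwa [hinv2 g C] at this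
    · rintro ⟨E, ⟨hNE, hcrE⟩, rfl⟩
      exact ⟨hNimg g E hNE, KroenAux.crossing_image (hbij g) hcrE⟩
  refine ⟨C₀, ?_, hC₀P, ?_, ?_⟩
  · exact KroenAux.isCut_of_tight hconn hC₀inf hC₀cinf hC₀fin hC₀W hC₀Wc
  · -- nestedness with all translates
    intro g
    by_contra hne
    unfold Nested at hne
    push_neg at hne
    obtain ⟨hn1, hn2, hn3, hn4⟩ := hne
    set D := (fun x : V => g • x) '' C₀ with hDdef
    have hcr : KroenAux.Crossing C₀ D := by
      refine ⟨?_, ?_, ?_, ?_⟩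
      · obtain ⟨z, hz1, hz2⟩ := Set.not_subset.mp hn2
        exact ⟨z, hz1, by simpa using hz2⟩
      · obtain ⟨z, hz1, hz2⟩ := Set.not_subset.mp hn1
        exact ⟨z, hz1, hz2⟩
      · obtain ⟨z, hz1, hz2⟩ := Set.not_subset.mp hn4
        exact ⟨z, hz1, by simpa using hz2⟩
      · obtain ⟨z, hz1, hz2⟩ := Set.not_subset.mp hn3
        exact ⟨z, hz1, hz2⟩
    have hND : KroenAux.NarrowP Θ P D := hNimg g C₀ hN₀
    have hμD : (KroenAux.crossers Θ P D).ncard = (KroenAux.crossers Θ P C₀).ncard := by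
      rw [hDdef, hXimg g C₀]
      exact Set.ncard_image_of_injective _ (Set.image_injective.mpr (hbij g).injective)
    obtain ⟨hDinf, hDcinf, hDW, hDWc, hDfin, hDP⟩ := hND.1
    rcases KroenAux.good_pair hcr hC₀inf hC₀cinf hDinf hDcinf with ⟨h1, h2⟩ | ⟨h1, h2⟩
    · exact KroenAux.main_contra hconn hsub hunion hN₀ hND hcr h1 h2 hminP hμD
    · refine KroenAux.main_contra hconn hsub hunion hN₀ (KroenAux.narrowP_compl hND)
        (KroenAux.crossing_compl_right.mpr hcr) h1 ?_ hminP ?_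
      · rw [compl_compl]
        exact h2
      · rw [KroenAux.crossers_compl]
        exact hμD
  · -- the complement is a cut as well
    refine KroenAux.isCut_of_tight hconn hC₀cinf ?_ ?_ hC₀Wc ?_
    · rw [compl_compl]
      exact hC₀inf
    · rw [KroenAux.cutBdry_compl]
      exact hC₀fin
    · rw [compl_compl]
      exact hC₀W
end

section
/- Let ι be an index type with at least two elements and let (G_i)_{i ∈ ι} be a family of nontrivial groups. In the free product ∗_{i ∈ ι} G_i, for every index i the normalizer of the image of the canonical inclusion G_i → ∗_{i ∈ ι} G_i is equal to that image. (The normaliser of a free factor in a nontrivial free product is that free factor.) -/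
open Monoid Monoid.CoprodI Monoid.CoprodI.Word Pointwise

section Aux

variable {ι : Type*} {G : ι → Type*} [∀ i, Group (G i)]

/-- The inverse of a reduced word: reverse the list and invert each letter. -/
private def invWord (w : Monoid.CoprodI.Word G) : Monoid.CoprodI.Word G where
  toList := (w.toList.map fun l => ⟨l.1, l.2⁻¹⟩).reverse
  ne_one := by
    intro l hl
    simp only [List.mem_reverse, List.mem_map] at hl
    obtain ⟨a, ha, rfl⟩ := hl
    simpa using w.ne_one a ha
  chain_ne := by
    rw [List.isChain_reverse]
    refine (List.isChain_map _).2 ?_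
    exact w.chain_ne.imp fun h => by simpa [flip, ne_comm] using h

private theorem prod_invWord (w : Monoid.CoprodI.Word G) :
    (invWord w).prod = w.prod⁻¹ := by
  simp only [Monoid.CoprodI.Word.prod, invWord, List.map_reverse, List.map_map,
    List.prod_reverse_noncomm]
  congr 1
  simp [Function.comp_def]

private theorem length_invWord (w : Monoid.CoprodI.Word G) :
    (invWord w).toList.length = w.toList.length := by
  simp [invWord]

private theorem fstIdx_invWord (w : Monoid.CoprodI.Word G) :
    (invWord w).fstIdx = w.toList.getLast?.map Sigma.fst := by
  simp only [Monoid.CoprodI.Word.fstIdx, invWord, List.head?_reverse, List.getLast?_map]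
  cases h : w.toList.getLast? <;> simp [h]

private theorem equiv_inv [DecidableEq ι] [∀ i, DecidableEq (G i)] (x : Monoid.CoprodI G) :
    Monoid.CoprodI.Word.equiv x⁻¹ = invWord (Monoid.CoprodI.Word.equiv x) := by
  have h1 : (invWord (Monoid.CoprodI.Word.equiv x)).prod = x⁻¹ := by
    rw [prod_invWord]
    congr 1
    exact Monoid.CoprodI.Word.equiv.symm_apply_apply x
  conv_lhs => rw [← h1]
  exact Monoid.CoprodI.Word.equiv.apply_symm_apply _

/-- The ping-pong hypothesis for the canonical action of the free product on words. -/
private theorem hpp_words [DecidableEq ι] [∀ i, DecidableEq (G i)] :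
    Pairwise fun j k => ∀ h : G j, h ≠ 1 →
      (Monoid.CoprodI.of h : Monoid.CoprodI G) •
          {w : Monoid.CoprodI.Word G | w.fstIdx = some k} ⊆
        {w : Monoid.CoprodI.Word G | w.fstIdx = some j} := by
  intro j k hjk h hh
  rintro _ ⟨w, hw, rfl⟩
  have hne : w.fstIdx ≠ some j := by
    simp only [Set.mem_setOf_eq] at hw
    rw [hw]
    simp [Ne.symm hjk]
  show (Monoid.CoprodI.of h • w).fstIdx = some j
  rw [Monoid.CoprodI.Word.of_smul_def, equivPair_eq_of_fstIdx_ne hne]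
  simp only [mul_one]
  rw [Monoid.CoprodI.Word.rcons, dif_neg hh]
  exact Monoid.CoprodI.Word.fstIdx_cons _ _ _ _

/-- A conjugate of a nontrivial element of `G i` by an element represented by a nonempty
reduced word whose first and last letters avoid `i` is never in the image of `G i`. -/
private theorem conj_ne_of [DecidableEq ι] [∀ i, DecidableEq (G i)]
    (hnt : ∀ i, Nontrivial (G i)) {i a b : ι} (ha : a ≠ i) (hb : b ≠ i)
    (w : Monoid.CoprodI.NeWord G a b) {g : G i} (hg : g ≠ 1) (g' : G i) :
    w.prod * Monoid.CoprodI.of g * w.prod⁻¹ ≠ Monoid.CoprodI.of g' := by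
  intro heq
  have hg' : g' ≠ 1 := by
    rintro rfl
    rw [map_one] at heq
    rw [mul_inv_eq_one, mul_eq_left] at heq
    exact hg (Monoid.CoprodI.of_injective i (by simpa using heq))
  -- the ne-word `w ++ g ++ w⁻¹ : a → a`
  let d : Monoid.CoprodI.NeWord G a a :=
    Monoid.CoprodI.NeWord.append
      (Monoid.CoprodI.NeWord.append w hb (Monoid.CoprodI.NeWord.singleton g hg))
      (Ne.symm hb) w.inv
  have hd : d.prod = Monoid.CoprodI.of g' := by
    simp only [d, Monoid.CoprodI.NeWord.append_prod, Monoid.CoprodI.NeWord.prod_singleton,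
      Monoid.CoprodI.NeWord.inv_prod]
    rw [← heq]
  -- ping-pong
  haveI := hnt i
  obtain ⟨s, hs⟩ := exists_ne (1 : G i)
  have h0 : (Monoid.CoprodI.Word.empty : Monoid.CoprodI.Word G).fstIdx ≠ some i := by
    simp [Monoid.CoprodI.Word.fstIdx, Monoid.CoprodI.Word.empty]
  let w₀ : Monoid.CoprodI.Word G := Monoid.CoprodI.Word.cons s Monoid.CoprodI.Word.empty h0 hs
  have hw₀ : w₀.fstIdx = some i := Monoid.CoprodI.Word.fstIdx_cons _ _ _ _
  have hpingpong :=
    Monoid.CoprodI.lift_word_ping_pong (fun j => (Monoid.CoprodI.of : G j →* Monoid.CoprodI G))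
      (fun j => {w : Monoid.CoprodI.Word G | w.fstIdx = some j}) hpp_words d ha
  have hmem : (Monoid.CoprodI.lift
        (fun j => (Monoid.CoprodI.of : G j →* Monoid.CoprodI G)) d.prod) • w₀ ∈
      {w : Monoid.CoprodI.Word G | w.fstIdx = some a} :=
    hpingpong (Set.smul_mem_smul_set hw₀)
  rw [Monoid.CoprodI.lift_of', MonoidHom.id_apply, hd] at hmem
  -- compute `of g' • w₀` directly
  have hw₀r : w₀ = Monoid.CoprodI.Word.rcons ⟨s, Monoid.CoprodI.Word.empty, h0⟩ := by
    rw [Monoid.CoprodI.Word.rcons, dif_neg hs]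
  have hpair : Monoid.CoprodI.Word.equivPair i w₀ = ⟨s, Monoid.CoprodI.Word.empty, h0⟩ := by
    rw [hw₀r, ← Monoid.CoprodI.Word.equivPair_symm, Equiv.apply_symm_apply]
  have hsmul : Monoid.CoprodI.of g' • w₀ =
      Monoid.CoprodI.Word.rcons ⟨g' * s, Monoid.CoprodI.Word.empty, h0⟩ := by
    rw [Monoid.CoprodI.Word.of_smul_def, hpair]
  rw [hsmul] at hmem
  simp only [Set.mem_setOf_eq] at hmem
  by_cases hgs : g' * s = 1
  · rw [Monoid.CoprodI.Word.rcons, dif_pos hgs] at hmem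
    simp [Monoid.CoprodI.Word.empty, Monoid.CoprodI.Word.fstIdx] at hmem
  · rw [Monoid.CoprodI.Word.rcons, dif_neg hgs, Monoid.CoprodI.Word.fstIdx_cons] at hmem
    exact ha (Option.some.inj hmem).symm

/-- Stripping the leading `G i`-letter from an element of the normalizer. -/
private theorem strip [DecidableEq ι] [∀ i, DecidableEq (G i)] (i : ι)
    {x : Monoid.CoprodI G}
    (hx : x ∈ Subgroup.normalizer ((Monoid.CoprodI.of : G i →* Monoid.CoprodI G).range : Set (Monoid.CoprodI G)))
    (hfst : (Monoid.CoprodI.Word.equiv x).fstIdx = some i) :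
    ∃ y : Monoid.CoprodI G,
      y ∈ Subgroup.normalizer ((Monoid.CoprodI.of : G i →* Monoid.CoprodI G).range : Set (Monoid.CoprodI G)) ∧
      (Monoid.CoprodI.Word.equiv y).toList.length + 1 =
        (Monoid.CoprodI.Word.equiv x).toList.length ∧
      (y ∈ (Monoid.CoprodI.of : G i →* Monoid.CoprodI G).range →
        x ∈ (Monoid.CoprodI.of : G i →* Monoid.CoprodI G).range) := by
  set p := Monoid.CoprodI.Word.equivPair i (Monoid.CoprodI.Word.equiv x) with hp
  have hrcons : Monoid.CoprodI.Word.rcons p = Monoid.CoprodI.Word.equiv x := by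
    rw [hp, ← Monoid.CoprodI.Word.equivPair_symm, Equiv.symm_apply_apply]
  have hhead : p.head ≠ 1 := by
    intro h1
    rw [Monoid.CoprodI.Word.rcons, dif_pos h1] at hrcons
    exact p.fstIdx_ne (hrcons ▸ hfst)
  have hcons : Monoid.CoprodI.Word.equiv x =
      Monoid.CoprodI.Word.cons p.head p.tail p.fstIdx_ne hhead := by
    rw [← hrcons, Monoid.CoprodI.Word.rcons, dif_neg hhead]
  refine ⟨p.tail.prod, ?_, ?_, ?_⟩
  · have hxeq : x = Monoid.CoprodI.of p.head * p.tail.prod := by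
      conv_lhs => rw [← Monoid.CoprodI.Word.equiv.symm_apply_apply x]
      rw [show (Monoid.CoprodI.Word.equiv.symm (Monoid.CoprodI.Word.equiv x) :
          Monoid.CoprodI G) = (Monoid.CoprodI.Word.equiv x).prod from rfl, ← hrcons,
        Monoid.CoprodI.Word.prod_rcons]
    have hof : (Monoid.CoprodI.of p.head : Monoid.CoprodI G) ∈
        Subgroup.normalizer ((Monoid.CoprodI.of : G i →* Monoid.CoprodI G).range : Set (Monoid.CoprodI G)) :=
      Subgroup.le_normalizer ⟨p.head, rfl⟩
    have : p.tail.prod = (Monoid.CoprodI.of p.head)⁻¹ * x := by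
      rw [hxeq]; group
    rw [this]
    exact mul_mem (inv_mem hof) hx
  · have : Monoid.CoprodI.Word.equiv p.tail.prod = p.tail :=
      Monoid.CoprodI.Word.equiv.apply_symm_apply p.tail
    rw [this, hcons]
    simp [Monoid.CoprodI.Word.cons]
  · rintro ⟨h', hh'⟩
    refine ⟨p.head * h', ?_⟩
    rw [map_mul, hh']
    conv_rhs => rw [← Monoid.CoprodI.Word.equiv.symm_apply_apply x]
    rw [show (Monoid.CoprodI.Word.equiv.symm (Monoid.CoprodI.Word.equiv x) :
        Monoid.CoprodI G) = (Monoid.CoprodI.Word.equiv x).prod from rfl, ← hrcons,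
      Monoid.CoprodI.Word.prod_rcons]

end Aux

/-- The normaliser of a free factor in a nontrivial free product is that free
factor: if `ι` has at least two elements and each group `G i` is nontrivial,
then in the free product `Monoid.CoprodI G` the normaliser of the image of the
canonical inclusion `G i → Monoid.CoprodI G` equals that image. -/
theorem normalizer_of_free_factor
    {ι : Type*} [Nontrivial ι] (G : ι → Type*) [∀ i, Group (G i)]
    (hnt : ∀ i, Nontrivial (G i)) (i : ι) :
    Subgroup.normalizer ((Monoid.CoprodI.of : G i →* Monoid.CoprodI G).range : Set (Monoid.CoprodI G)) =
      (Monoid.CoprodI.of : G i →* Monoid.CoprodI G).range := by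
  classical
  refine le_antisymm ?_ Subgroup.le_normalizer
  suffices H : ∀ (n : ℕ) (x : Monoid.CoprodI G),
      (Monoid.CoprodI.Word.equiv x).toList.length ≤ n →
      x ∈ Subgroup.normalizer ((Monoid.CoprodI.of : G i →* Monoid.CoprodI G).range : Set (Monoid.CoprodI G)) →
      x ∈ (Monoid.CoprodI.of : G i →* Monoid.CoprodI G).range by
    intro x hx
    exact H _ x le_rfl hx
  intro n
  induction n with
  | zero =>
    intro x hlen _
    have hempty : Monoid.CoprodI.Word.equiv x = Monoid.CoprodI.Word.empty := by
      apply Monoid.CoprodI.Word.ext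
      simpa [Monoid.CoprodI.Word.empty, List.length_eq_zero_iff] using Nat.le_zero.mp hlen
    have : x = 1 := by
      have := congrArg Monoid.CoprodI.Word.equiv.symm hempty
      rw [Equiv.symm_apply_apply] at this
      exact this.trans Monoid.CoprodI.Word.prod_empty
    rw [this]
    exact one_mem _
  | succ n ih =>
    intro x hlen hx
    by_cases hxe : Monoid.CoprodI.Word.equiv x = Monoid.CoprodI.Word.empty
    · have : x = 1 := by
        have := congrArg Monoid.CoprodI.Word.equiv.symm hxe
        rw [Equiv.symm_apply_apply] at this
        exact this.trans Monoid.CoprodI.Word.prod_empty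
      rw [this]; exact one_mem _
    obtain ⟨a, b, w, hw⟩ := Monoid.CoprodI.NeWord.of_word _ hxe
    have hfst : (Monoid.CoprodI.Word.equiv x).fstIdx = some a := by
      rw [← hw]
      simp [Monoid.CoprodI.Word.fstIdx, Monoid.CoprodI.NeWord.toWord]
    have hlast : (Monoid.CoprodI.Word.equiv x).toList.getLast? = some ⟨b, w.last⟩ := by
      rw [← hw]
      exact Monoid.CoprodI.NeWord.toList_getLast? w
    by_cases hai : a = i
    · rw [hai] at hfst
      obtain ⟨y, hyN, hylen, hyr⟩ := strip i hx hfst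
      exact hyr (ih y (by omega) hyN)
    · by_cases hbi : b = i
      · -- work with `x⁻¹`
        have hxinv : x⁻¹ ∈ Subgroup.normalizer ((Monoid.CoprodI.of : G i →* Monoid.CoprodI G).range : Set (Monoid.CoprodI G)) :=
          inv_mem hx
        have hfst' : (Monoid.CoprodI.Word.equiv x⁻¹).fstIdx = some i := by
          rw [equiv_inv, fstIdx_invWord, hlast]
          simp [hbi]
        have hlen' : (Monoid.CoprodI.Word.equiv x⁻¹).toList.length ≤ n + 1 := by
          rw [equiv_inv, length_invWord]; exact hlen
        obtain ⟨y, hyN, hylen, hyr⟩ := strip i hxinv hfst'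
        have : x⁻¹ ∈ (Monoid.CoprodI.of : G i →* Monoid.CoprodI G).range :=
          hyr (ih y (by omega) hyN)
        simpa using inv_mem this
      · exfalso
        haveI := hnt i
        obtain ⟨g, hg⟩ := exists_ne (1 : G i)
        have h1 : x * Monoid.CoprodI.of g * x⁻¹ ∈
            (Monoid.CoprodI.of : G i →* Monoid.CoprodI G).range :=
          (Subgroup.mem_normalizer_iff.mp hx (Monoid.CoprodI.of g)).mp ⟨g, rfl⟩
        obtain ⟨g', hg'⟩ := h1
        have hprod : w.prod = x := by
          rw [Monoid.CoprodI.NeWord.prod, hw]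
          exact Monoid.CoprodI.Word.equiv.symm_apply_apply x
        exact conj_ne_of hnt hai hbi w hg g' (by rw [hprod, hg'])
end

section
/- Let Θ be a connected simple graph and let 𝒫 be a property of finite sets of edges of Θ which is stable under passing to subsets, and suppose at least one 𝒫-cut exists. Then for every 𝒫-narrow cut C, the complement C* is also a cut, and the boundary of C* equals the boundary of C. -/
private lemma walk_closed {V : Type*} {G : SimpleGraph V} {S : Set V}
    (hS : ∀ ⦃a b : V⦄, G.Adj a b → a ∈ S → b ∈ S) :
    ∀ {u v : V}, G.Reachable u v → u ∈ S → v ∈ S := by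
  intro u v h hu
  obtain ⟨w⟩ := h
  induction w with
  | nil => exact hu
  | cons h p ih => exact ih (hS h hu)

/-- For a subset-closed property `P` of finite edge sets of a connected graph
admitting at least one `P`-cut, the complement of any `P`-narrow cut is again a
cut, with the same boundary. -/
theorem pNarrow_compl_isCut
    {V : Type*} (Θ : SimpleGraph V) (hconn : Θ.Connected)
    (P : Set (Sym2 V) → Prop)
    (hsub : ∀ F F' : Set (Sym2 V), F.Finite → F' ⊆ F → P F → P F')
    (hex : ∃ C : Set V, IsPCut Θ P C)
    (C : Set V) (hC : IsPNarrow Θ P C) :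
    IsCut Θ Cᶜ ∧ cutBdry Θ Cᶜ = cutBdry Θ C := by
  classical
  obtain ⟨⟨⟨F, ⟨hFfin, hFsub, hFdisc, K0, L0, hK0L0, hK0inf, hL0inf⟩, K, hKinf, hCK⟩, hPC⟩,
    hmin⟩ := hC
  -- choose an infinite component L ≠ K
  obtain ⟨L, hLK, hLinf⟩ :
      ∃ L : (Θ.deleteEdges F).ConnectedComponent, L ≠ K ∧ L.supp.Infinite := by
    by_cases h : K0 = K
    · exact ⟨L0, fun hh => hK0L0 (h.trans hh.symm), hL0inf⟩
    · exact ⟨K0, h, hK0inf⟩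
  set B : Set (Sym2 V) := cutBdry Θ C with hBdef
  have hBedge : B ⊆ Θ.edgeSet := fun e he => he.1
  have hBF : B ⊆ F := by
    rintro e ⟨hee, u, v, rfl, hu, hv⟩
    by_contra hF
    have hadj : (Θ.deleteEdges F).Adj u v := by
      rw [SimpleGraph.deleteEdges_adj]
      exact ⟨(SimpleGraph.mem_edgeSet Θ).1 hee, hF⟩
    apply hv
    rw [hCK] at hu ⊢
    rw [SimpleGraph.ConnectedComponent.mem_supp_iff] at hu ⊢
    rw [← hu]
    exact (SimpleGraph.ConnectedComponent.sound hadj.reachable).symm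
  have hBfin : B.Finite := hFfin.subset hBF
  set G' : SimpleGraph V := Θ.deleteEdges B with hG'def
  have hle : Θ.deleteEdges F ≤ G' := by
    intro u v huv
    rw [SimpleGraph.deleteEdges_adj] at huv ⊢
    exact ⟨huv.1, fun h => huv.2 (hBF h)⟩
  -- C is closed under G'-adjacency
  have hCclosed : ∀ ⦃a b : V⦄, G'.Adj a b → a ∈ C → b ∈ C := by
    intro a b hab ha
    by_contra hb
    rw [hG'def, SimpleGraph.deleteEdges_adj] at hab
    exact hab.2 ⟨(SimpleGraph.mem_edgeSet Θ).2 hab.1, a, b, rfl, ha, hb⟩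
  have hCcclosed : ∀ ⦃a b : V⦄, G'.Adj a b → a ∈ Cᶜ → b ∈ Cᶜ := by
    intro a b hab ha hb
    rw [hG'def, SimpleGraph.deleteEdges_adj] at hab
    exact hab.2 ⟨(SimpleGraph.mem_edgeSet Θ).2 hab.1, b, a, Sym2.eq_swap, hb, ha⟩
  have hCinf : C.Infinite := hCK ▸ hKinf
  obtain ⟨c, hc⟩ := hCinf.nonempty
  -- C is the support of the G'-component of c
  have hreachC : ∀ x ∈ C, G'.Reachable c x := by
    intro x hx
    apply SimpleGraph.Reachable.mono hle
    apply SimpleGraph.ConnectedComponent.exact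
    rw [hCK, SimpleGraph.ConnectedComponent.mem_supp_iff] at hx hc
    rw [hx, hc]
  have hCsupp : C = (G'.connectedComponentMk c).supp := by
    ext x
    constructor
    · intro hx
      rw [SimpleGraph.ConnectedComponent.mem_supp_iff]
      exact (SimpleGraph.ConnectedComponent.sound (hreachC x hx)).symm
    · intro hx
      rw [SimpleGraph.ConnectedComponent.mem_supp_iff] at hx
      exact walk_closed hCclosed (SimpleGraph.ConnectedComponent.exact hx.symm) hc
  obtain ⟨d, hd⟩ := hLinf.nonempty
  have hdC : d ∉ C := by
    intro hdc
    apply hLK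
    rw [hCK, SimpleGraph.ConnectedComponent.mem_supp_iff] at hdc
    rw [SimpleGraph.ConnectedComponent.mem_supp_iff] at hd
    rw [← hd, hdc]
  set D : Set V := (G'.connectedComponentMk d).supp with hDdef
  have hDclosed : ∀ ⦃a b : V⦄, G'.Adj a b → a ∈ D → b ∈ D := by
    intro a b hab ha
    rw [hDdef, SimpleGraph.ConnectedComponent.mem_supp_iff] at ha ⊢
    rw [← ha]
    exact SimpleGraph.ConnectedComponent.sound hab.symm.reachable
  have hDCc : D ⊆ Cᶜ := by
    intro x hx
    rw [hDdef, SimpleGraph.ConnectedComponent.mem_supp_iff] at hx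
    exact walk_closed hCcclosed (SimpleGraph.ConnectedComponent.exact hx.symm) hdC
  have hLD : L.supp ⊆ D := by
    intro x hx
    rw [hDdef, SimpleGraph.ConnectedComponent.mem_supp_iff]
    apply SimpleGraph.ConnectedComponent.sound
    apply SimpleGraph.Reachable.mono hle
    apply SimpleGraph.ConnectedComponent.exact
    rw [SimpleGraph.ConnectedComponent.mem_supp_iff] at hx hd
    rw [hx, hd]
  have hDinf : D.Infinite := hLinf.mono hLD
  have hcd : ¬ G'.Reachable c d := fun h => hdC (walk_closed hCclosed h hc)
  have hBcut : IsCuttingEdges Θ B := by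
    refine ⟨hBfin, hBedge, fun hco => hcd (hco.preconnected c d),
      G'.connectedComponentMk c, G'.connectedComponentMk d,
      fun h => hcd (SimpleGraph.ConnectedComponent.exact h), ?_, hDinf⟩
    rw [← hCsupp]; exact hCinf
  have hDB : cutBdry Θ D ⊆ B := by
    rintro e ⟨hee, u, v, rfl, hu, hv⟩
    by_contra hB'
    have hadj : G'.Adj u v := by
      rw [hG'def, SimpleGraph.deleteEdges_adj]
      exact ⟨(SimpleGraph.mem_edgeSet Θ).1 hee, hB'⟩
    exact hv (hDclosed hadj hu)
  have hDP : IsPCut Θ P D :=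
    ⟨⟨B, hBcut, G'.connectedComponentMk d, hDinf, rfl⟩, hsub B _ hBfin hDB hPC⟩
  have hEq : cutBdry Θ D = B :=
    Set.eq_of_subset_of_ncard_le hDB (hmin D hDP) hBfin
  -- every vertex outside C lies in D
  have hCcD : Cᶜ ⊆ D := by
    intro x hx
    by_contra hxD
    set D' : Set V := (G'.connectedComponentMk x).supp with hD'def
    have hxD' : x ∈ D' := by
      rw [hD'def, SimpleGraph.ConnectedComponent.mem_supp_iff]
    have hD'Cc : D' ⊆ Cᶜ := by
      intro y hy
      rw [hD'def, SimpleGraph.ConnectedComponent.mem_supp_iff] at hy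
      exact walk_closed hCcclosed (SimpleGraph.ConnectedComponent.exact hy.symm) hx
    have hD'D : ∀ y ∈ D', y ∉ D := by
      intro y hy hyD
      apply hxD
      rw [hD'def, SimpleGraph.ConnectedComponent.mem_supp_iff] at hy
      rw [hDdef, SimpleGraph.ConnectedComponent.mem_supp_iff] at hyD ⊢
      rw [← hy, hyD]
    have hD'closed : ∀ ⦃a b : V⦄, Θ.Adj a b → a ∈ D' → b ∈ D' := by
      intro a b hab ha
      by_contra hb
      have hD'G' : ∀ ⦃p q : V⦄, G'.Adj p q → p ∈ D' → q ∈ D' := by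
        intro p q hpq hp
        rw [hD'def, SimpleGraph.ConnectedComponent.mem_supp_iff] at hp ⊢
        rw [← hp]
        exact SimpleGraph.ConnectedComponent.sound hpq.symm.reachable
      have heB : s(a, b) ∈ B := by
        by_contra h
        exact hb (hD'G' (by rw [hG'def, SimpleGraph.deleteEdges_adj]; exact ⟨hab, h⟩) ha)
      -- from hEq, one endpoint of this edge is in D
      have heD : s(a, b) ∈ cutBdry Θ D := hEq ▸ heB
      obtain ⟨_, p, q, hpq, hp, hq⟩ := heD
      have hbD : b ∈ D := by
        rcases Sym2.eq_iff.1 hpq.symm with ⟨h1, h2⟩ | ⟨h1, h2⟩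
        · exact absurd (h1 ▸ hp) (hD'D a ha)
        · exact h1 ▸ hp
      -- from hBdef, one endpoint is in C
      obtain ⟨_, u, v, huv, hu, hv⟩ := heB
      rcases Sym2.eq_iff.1 huv.symm with ⟨h1, h2⟩ | ⟨h1, h2⟩
      · exact hD'Cc ha (h1 ▸ hu)
      · exact hDCc hbD (h1 ▸ hu)
    have : c ∈ D' := walk_closed hD'closed (hconn.preconnected x c) hxD'
    exact hD'Cc this hc
  have hCcEq : Cᶜ = D := subset_antisymm hCcD hDCc
  constructor
  · exact ⟨B, hBcut, G'.connectedComponentMk d, hDinf, hCcEq⟩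
  · ext e
    constructor
    · rintro ⟨hee, u, v, rfl, hu, hv⟩
      exact ⟨hee, v, u, Sym2.eq_swap, not_not.1 (fun h => hv h), hu⟩
    · rintro ⟨hee, u, v, rfl, hu, hv⟩
      exact ⟨hee, v, u, Sym2.eq_swap, hv, fun h => h hu⟩
end

section
/- Let Θ be a connected simple graph and let 𝒫 be a property of finite sets of edges of Θ which is stable under passing to subsets, and suppose at least one 𝒫-cut exists. Then for every edge e of Θ, there are only finitely many 𝒫-narrow cuts whose boundary contains e. -/
open SimpleGraph

section Prelim

variable {V : Type*} {Θ : SimpleGraph V}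

lemma mem_of_walk_of_closed {G : SimpleGraph V} {C : Set V}
    (hC : ∀ ⦃a b : V⦄, a ∈ C → G.Adj a b → b ∈ C) {u v : V}
    (w : G.Walk u v) : u ∈ C → v ∈ C := by
  induction w with
  | nil => exact id
  | cons ha _ ih => exact fun hu => ih (hC hu ha)

lemma cutBdry_subset_edgeSet (C : Set V) : cutBdry Θ C ⊆ Θ.edgeSet := fun _ hf => hf.1

lemma cutBdry_supp_subset (F : Set (Sym2 V)) (K : (Θ.deleteEdges F).ConnectedComponent) :
    cutBdry Θ K.supp ⊆ F := by
  rintro f ⟨hf, u, v, rfl, hu, hv⟩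
  by_contra hfF
  have hadj : (Θ.deleteEdges F).Adj u v := by
    rw [deleteEdges_adj]; exact ⟨Θ.mem_edgeSet.mp hf, hfF⟩
  apply hv
  rw [ConnectedComponent.mem_supp_iff] at hu ⊢
  rw [← hu]
  exact ConnectedComponent.eq.mpr hadj.symm.reachable

lemma supp_closed (F : Set (Sym2 V)) (K : (Θ.deleteEdges F).ConnectedComponent) :
    ∀ ⦃a b : V⦄, a ∈ K.supp → (Θ.deleteEdges (cutBdry Θ K.supp)).Adj a b → b ∈ K.supp := by
  intro a b ha hadj
  rw [deleteEdges_adj] at hadj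
  by_contra hb
  exact hadj.2 ⟨Θ.mem_edgeSet.mpr hadj.1, a, b, rfl, ha, hb⟩

lemma supp_comp_eq (F : Set (Sym2 V)) (K : (Θ.deleteEdges F).ConnectedComponent)
    {u : V} (hu : u ∈ K.supp) :
    ((Θ.deleteEdges (cutBdry Θ K.supp)).connectedComponentMk u).supp = K.supp := by
  apply Set.Subset.antisymm
  · intro v hv
    rw [ConnectedComponent.mem_supp_iff, ConnectedComponent.eq] at hv
    obtain ⟨w⟩ := hv.symm
    exact mem_of_walk_of_closed (supp_closed F K) w hu
  · intro v hv
    rw [ConnectedComponent.mem_supp_iff, ConnectedComponent.eq]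
    have h1 : (Θ.deleteEdges F).Reachable v u := by
      rw [ConnectedComponent.mem_supp_iff] at hv
      exact ConnectedComponent.eq.mp (hv.trans hu.symm)
    exact Reachable.mono (deleteEdges_anti (cutBdry_supp_subset F K)) h1

lemma exists_petal_edge {Y B : Set (Sym2 V)} {x y : V}
    (w : (Θ.deleteEdges Y).Walk x y) (hsep : ¬ (Θ.deleteEdges B).Reachable x y) :
    ∃ f, f ∈ w.edges ∧ f ∈ B ∧ f ∉ Y := by
  induction w with
  | nil => exact absurd (Reachable.refl _) hsep
  | @cons a b c hadj p ih =>
    rw [deleteEdges_adj] at hadj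
    by_cases hB : s(a, b) ∈ B
    · exact ⟨s(a, b), by simp [Walk.edges_cons], hB, hadj.2⟩
    · have hadj' : (Θ.deleteEdges B).Adj a b := deleteEdges_adj.mpr ⟨hadj.1, hB⟩
      have hsep' : ¬ (Θ.deleteEdges B).Reachable b c := fun hr => hsep (hadj'.reachable.trans hr)
      obtain ⟨f, hf1, hf2, hf3⟩ := ih hsep'
      exact ⟨f, by simp [Walk.edges_cons, hf1], hf2, hf3⟩

end Prelim

/-- The infinite Δ-system (sunflower) lemma for families of finite sets of
uniformly bounded size. -/
lemma infinite_delta_system {α : Type*} [DecidableEq α] :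
    ∀ (n : ℕ) (𝔅 : Set (Finset α)), 𝔅.Infinite → (∀ B ∈ 𝔅, B.card ≤ n) →
      ∃ (Y : Finset α) (𝔖 : Set (Finset α)), 𝔖 ⊆ 𝔅 ∧ 𝔖.Infinite ∧
        (∀ B ∈ 𝔖, Y ⊆ B) ∧ ∀ B ∈ 𝔖, ∀ B' ∈ 𝔖, B ≠ B' → B ∩ B' = Y := by
  intro n
  induction n with
  | zero =>
    intro 𝔅 hinf hcard
    exact absurd ((Set.finite_singleton (∅ : Finset α)).subset fun B hB =>
      Set.mem_singleton_iff.mpr (Finset.card_eq_zero.mp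
        (Nat.le_zero.mp (hcard B hB)))) hinf
  | succ n ih =>
    intro 𝔅 hinf hcard
    by_cases h : ∃ a : α, {B ∈ 𝔅 | a ∈ B}.Infinite
    · obtain ⟨a, ha⟩ := h
      classical
      set 𝔄 := {B ∈ 𝔅 | a ∈ B} with h𝔄
      have hinj : Set.InjOn (fun B : Finset α => B.erase a) 𝔄 := by
        intro B hB B' hB' hEq
        have h2 := congrArg (insert a) hEq
        simpa [Finset.insert_erase hB.2, Finset.insert_erase hB'.2] using h2
      have h2 : ((fun B : Finset α => B.erase a) '' 𝔄).Infinite := ha.image hinj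
      have hcard2 : ∀ B ∈ (fun B : Finset α => B.erase a) '' 𝔄, B.card ≤ n := by
        rintro _ ⟨B, hB, rfl⟩
        have := hcard B hB.1
        rw [Finset.card_erase_of_mem hB.2]
        omega
      obtain ⟨Y', 𝔖', h𝔖'sub, h𝔖'inf, hYsub, hint⟩ := ih _ h2 hcard2
      refine ⟨insert a Y', {B ∈ 𝔄 | B.erase a ∈ 𝔖'}, fun B hB => hB.1.1, ?_, ?_, ?_⟩
      · intro hfin
        apply h𝔖'inf
        apply (hfin.image (fun B : Finset α => B.erase a)).subset
        intro s hs
        obtain ⟨B, hB, rfl⟩ := h𝔖'sub hs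
        exact ⟨B, ⟨hB, hs⟩, rfl⟩
      · rintro B ⟨hB𝔄, hBe⟩
        exact Finset.insert_subset hB𝔄.2 ((hYsub _ hBe).trans (Finset.erase_subset a B))
      · rintro B ⟨hB𝔄, hBe⟩ B' ⟨hB'𝔄, hB'e⟩ hne
        have hne' : B.erase a ≠ B'.erase a := fun hEq => hne (hinj hB𝔄 hB'𝔄 hEq)
        have hI := hint _ hBe _ hB'e hne'
        ext z
        by_cases hz : z = a
        · subst hz; simp [hB𝔄.2, hB'𝔄.2]
        · simp only [Finset.mem_inter, Finset.mem_insert, hz, false_or]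
          constructor
          · rintro ⟨h1, h2⟩
            have : z ∈ B.erase a ∩ B'.erase a :=
              Finset.mem_inter.mpr ⟨Finset.mem_erase.mpr ⟨hz, h1⟩, Finset.mem_erase.mpr ⟨hz, h2⟩⟩
            rw [hI] at this
            exact this
          · intro hY'
            have : z ∈ B.erase a ∩ B'.erase a := hI ▸ hY'
            rw [Finset.mem_inter, Finset.mem_erase, Finset.mem_erase] at this
            exact ⟨this.1.2, this.2.2⟩
    · push_neg at h
      have hfin' : ∀ a : α, {B ∈ 𝔅 | a ∈ B}.Finite := fun a => h a
      have hchains : ∀ c ⊆ {𝔖 : Set (Finset α) | 𝔖 ⊆ 𝔅 ∧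
          ∀ B ∈ 𝔖, ∀ B' ∈ 𝔖, B ≠ B' → B ∩ B' = ∅}, IsChain (· ⊆ ·) c →
          ∃ ub ∈ {𝔖 : Set (Finset α) | 𝔖 ⊆ 𝔅 ∧
            ∀ B ∈ 𝔖, ∀ B' ∈ 𝔖, B ≠ B' → B ∩ B' = ∅}, ∀ s ∈ c, s ⊆ ub := by
        intro c hcS hchain
        refine ⟨⋃₀ c, ⟨?_, ?_⟩, fun s hs => Set.subset_sUnion_of_mem hs⟩
        · rintro B ⟨s, hs, hBs⟩
          exact (hcS hs).1 hBs
        · rintro B ⟨s, hs, hBs⟩ B' ⟨s', hs', hB's'⟩ hne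
          rcases hchain.total hs hs' with hss | hss
          · exact (hcS hs').2 B (hss hBs) B' hB's' hne
          · exact (hcS hs).2 B hBs B' (hss hB's') hne
      obtain ⟨𝔐, h𝔐⟩ := zorn_subset
        {𝔖 : Set (Finset α) | 𝔖 ⊆ 𝔅 ∧ ∀ B ∈ 𝔖, ∀ B' ∈ 𝔖, B ≠ B' → B ∩ B' = ∅} hchains
      have h𝔐S := h𝔐.prop
      by_cases hMfin : 𝔐.Finite
      · exfalso
        apply hinf
        have hsub : 𝔅 ⊆ 𝔐 ∪ ⋃ a ∈ ⋃ B ∈ 𝔐, (B : Set α), {B' ∈ 𝔅 | a ∈ B'} := by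
          intro B hB
          by_cases hBM : B ∈ 𝔐
          · exact Or.inl hBM
          · have : ∃ B' ∈ 𝔐, (B ∩ B').Nonempty := by
              by_contra hno
              push_neg at hno
              have hmem : insert B 𝔐 ∈ {𝔖 : Set (Finset α) | 𝔖 ⊆ 𝔅 ∧
                  ∀ B ∈ 𝔖, ∀ B' ∈ 𝔖, B ≠ B' → B ∩ B' = ∅} := by
                constructor
                · exact Set.insert_subset hB h𝔐S.1
                · rintro C (rfl | hC) C' (rfl | hC') hne
                  · exact absurd rfl hne
                  · exact hno C' hC'
                  · rw [Finset.inter_comm]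
                    exact hno C hC
                  · exact h𝔐S.2 C hC C' hC' hne
              have := h𝔐.eq_of_ge hmem (Set.subset_insert B 𝔐)
              exact hBM (this ▸ Set.mem_insert B 𝔐)
            obtain ⟨B', hB'M, a, haB⟩ := this
            rw [Finset.mem_inter] at haB
            refine Or.inr (Set.mem_biUnion ?_ ⟨hB, haB.1⟩)
            exact Set.mem_biUnion hB'M haB.2
        refine (Set.Finite.union hMfin ?_).subset hsub
        refine Set.Finite.biUnion (hMfin.biUnion fun B _ => B.finite_toSet) fun a _ => hfin' a
      · refine ⟨∅, 𝔐, h𝔐S.1, hMfin, fun B _ => Finset.empty_subset B, h𝔐S.2⟩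

section Narrow

variable {V : Type*} {Θ : SimpleGraph V}

/-- The key structural lemma: if `C` is a `P`-narrow cut, `x ∈ C`, `y ∉ C`, and
`s(x,y)` is an edge, then (letting `B := cutBdry Θ C` and `G := Θ − B`)
`C` is the vertex set of the component of `x`, the component of `y` has infinite
support, and `x, y` are not reachable from each other in `G`. -/
lemma narrow_side {P : Set (Sym2 V) → Prop}
    (hsub : ∀ F F' : Set (Sym2 V), F.Finite → F' ⊆ F → P F → P F')
    {C : Set V} (hC : IsPNarrow Θ P C) {x y : V}
    (hx : x ∈ C) (hy : y ∉ C) (he : s(x, y) ∈ Θ.edgeSet) :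
    ((Θ.deleteEdges (cutBdry Θ C)).connectedComponentMk x).supp = C ∧
      ((Θ.deleteEdges (cutBdry Θ C)).connectedComponentMk y).supp.Infinite ∧
      ¬ (Θ.deleteEdges (cutBdry Θ C)).Reachable x y := by
  obtain ⟨⟨⟨F, hF, K, hKinf, rfl⟩, hP⟩, hmin⟩ := hC
  set B := cutBdry Θ K.supp with hB
  have hBF : B ⊆ F := cutBdry_supp_subset F K
  have hBfin : B.Finite := hF.1.subset hBF
  have hBedge : B ⊆ Θ.edgeSet := cutBdry_subset_edgeSet _
  have h1 : ((Θ.deleteEdges B).connectedComponentMk x).supp = K.supp := supp_comp_eq F K hx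
  obtain ⟨K₁, K₂, hK12, hK1inf, hK2inf⟩ := hF.2.2.2
  have hK' : ∃ K' : (Θ.deleteEdges F).ConnectedComponent, K' ≠ K ∧ K'.supp.Infinite := by
    by_cases hq : K₁ = K
    · exact ⟨K₂, fun hq2 => hK12 (hq.trans hq2.symm), hK2inf⟩
    · exact ⟨K₁, hq, hK1inf⟩
  obtain ⟨K', hK'K, hK'inf⟩ := hK'
  obtain ⟨w, hw⟩ := hK'inf.nonempty
  have hwC : w ∉ K.supp := by
    intro hwK
    rw [SimpleGraph.ConnectedComponent.mem_supp_iff] at hw hwK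
    exact hK'K (hw.symm.trans hwK)
  set M := (Θ.deleteEdges B).connectedComponentMk w with hM
  have hwM : w ∈ M.supp := by rw [SimpleGraph.ConnectedComponent.mem_supp_iff]
  have hMsupp : K'.supp ⊆ M.supp := by
    intro v hv
    rw [SimpleGraph.ConnectedComponent.mem_supp_iff] at hv ⊢
    rw [hM, SimpleGraph.ConnectedComponent.eq]
    have : (Θ.deleteEdges F).Reachable v w := by
      rw [← SimpleGraph.ConnectedComponent.eq]
      rw [SimpleGraph.ConnectedComponent.mem_supp_iff] at hw
      exact hv.trans hw.symm
    exact SimpleGraph.Reachable.mono (SimpleGraph.deleteEdges_anti hBF) this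
  have hMinf : M.supp.Infinite := hK'inf.mono hMsupp
  have hMx : M ≠ (Θ.deleteEdges B).connectedComponentMk x := by
    intro hq
    apply hwC
    rw [← h1, ← hq]
    exact hwM
  have hdisj : ∀ v : V, v ∈ M.supp → v ∈ K.supp → False := by
    intro v hvM hvK
    rw [← h1] at hvK
    rw [SimpleGraph.ConnectedComponent.mem_supp_iff] at hvM hvK
    exact hMx (hvM.symm.trans hvK)
  have hcut : IsCuttingEdges Θ B := by
    refine ⟨hBfin, hBedge, ?_, (Θ.deleteEdges B).connectedComponentMk x, M, ?_, ?_, hMinf⟩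
    · intro hc
      apply hMx
      rw [hM, SimpleGraph.ConnectedComponent.eq]
      exact hc.preconnected w x
    · exact fun hq => hMx hq.symm
    · rw [h1]; exact hKinf
  have hMcut : IsPCut Θ P M.supp := by
    refine ⟨⟨B, hcut, M, hMinf, rfl⟩, ?_⟩
    exact hsub B _ hBfin (cutBdry_supp_subset B M) hP
  have hMeq : cutBdry Θ M.supp = B :=
    Set.eq_of_subset_of_ncard_le (cutBdry_supp_subset B M) (hmin M.supp hMcut) hBfin
  have heB : s(x, y) ∈ B := ⟨he, x, y, rfl, hx, hy⟩
  have hyM : y ∈ M.supp := by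
    rw [← hMeq] at heB
    obtain ⟨_, u, v, huv, hu, hv⟩ := heB
    rcases Sym2.eq_iff.mp huv with ⟨hxu, hyv⟩ | ⟨hxv, hyu⟩
    · exact absurd hx (fun hx' => hdisj x (hxu ▸ hu) hx')
    · exact hyu ▸ hu
  constructor
  · exact h1
  constructor
  · have : (Θ.deleteEdges B).connectedComponentMk y = M := by
      rw [SimpleGraph.ConnectedComponent.mem_supp_iff] at hyM; exact hyM
    rw [this]; exact hMinf
  · intro hr
    apply hMx
    rw [SimpleGraph.ConnectedComponent.mem_supp_iff] at hyM
    rw [← hyM, SimpleGraph.ConnectedComponent.eq]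
    exact hr.symm

end Narrow

/-- For a subset-closed property `P` of finite edge sets of a connected graph
admitting at least one `P`-cut, any given edge lies in the boundary of only
finitely many `P`-narrow cuts. -/
theorem finitely_many_pNarrow_cuts_through_edge
    {V : Type*} (Θ : SimpleGraph V) (hconn : Θ.Connected)
    (P : Set (Sym2 V) → Prop)
    (hsub : ∀ F F' : Set (Sym2 V), F.Finite → F' ⊆ F → P F → P F')
    (hex : ∃ C : Set V, IsPCut Θ P C)
    (e : Sym2 V) (he : e ∈ Θ.edgeSet) :
    {C : Set V | IsPNarrow Θ P C ∧ e ∈ cutBdry Θ C}.Finite := by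
  classical
  revert he
  induction e using Sym2.ind with
  | _ x y =>
  intro he
  by_contra hfin
  have hS : {C : Set V | IsPNarrow Θ P C ∧ s(x, y) ∈ cutBdry Θ C}.Infinite := hfin
  set S := {C : Set V | IsPNarrow Θ P C ∧ s(x, y) ∈ cutBdry Θ C} with hSdef
  have key : ∀ C ∈ S, (cutBdry Θ C).Finite ∧ P (cutBdry Θ C) ∧ cutBdry Θ C ⊆ Θ.edgeSet ∧
      ¬ (Θ.deleteEdges (cutBdry Θ C)).Reachable x y ∧
      ((Θ.deleteEdges (cutBdry Θ C)).connectedComponentMk x).supp.Infinite ∧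
      ((Θ.deleteEdges (cutBdry Θ C)).connectedComponentMk y).supp.Infinite ∧
      (C = ((Θ.deleteEdges (cutBdry Θ C)).connectedComponentMk x).supp ∨
        C = ((Θ.deleteEdges (cutBdry Θ C)).connectedComponentMk y).supp) := by
    rintro C ⟨hN, heC⟩
    have hPc : P (cutBdry Θ C) := hN.1.2
    have hfinB : (cutBdry Θ C).Finite := by
      obtain ⟨F, hF, K, hKinf, hCeq⟩ := hN.1.1
      rw [hCeq]
      exact hF.1.subset (cutBdry_supp_subset F K)
    have hCinf : C.Infinite := by
      obtain ⟨F, hF, K, hKinf, hCeq⟩ := hN.1.1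
      rw [hCeq]; exact hKinf
    obtain ⟨hfE, u, v, huv, hu, hv⟩ := heC
    rcases Sym2.eq_iff.mp huv with ⟨hxu, hyv⟩ | ⟨hxv, hyu⟩
    · subst hxu; subst hyv
      obtain ⟨h1, h2, h3⟩ := narrow_side hsub hN hu hv he
      exact ⟨hfinB, hPc, cutBdry_subset_edgeSet C, h3, by rw [h1]; exact hCinf, h2,
        Or.inl h1.symm⟩
    · subst hxv; subst hyu
      have he' : s(y, x) ∈ Θ.edgeSet := by rwa [Sym2.eq_swap]
      obtain ⟨h1, h2, h3⟩ := narrow_side hsub hN hu hv he'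
      exact ⟨hfinB, hPc, cutBdry_subset_edgeSet C, fun hr => h3 hr.symm, h2,
        by rw [h1]; exact hCinf, Or.inr h1.symm⟩
  obtain ⟨C₀, hC₀⟩ := hS.nonempty
  have hmin : ∀ D : Set V, IsPCut Θ P D →
      (cutBdry Θ C₀).ncard ≤ (cutBdry Θ D).ncard := hC₀.1.2
  set n := (cutBdry Θ C₀).ncard with hn
  have hcardB : ∀ C ∈ S, (cutBdry Θ C).ncard = n :=
    fun C hC => le_antisymm (hC.1.2 C₀ hC₀.1.1) (hmin C hC.1.1)
  set ℬ := cutBdry Θ '' S with hℬ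
  have hℬinf : ℬ.Infinite := by
    intro hfinℬ
    apply hS
    have hsubS : S ⊆ ⋃ B ∈ ℬ, ({((Θ.deleteEdges B).connectedComponentMk x).supp,
        ((Θ.deleteEdges B).connectedComponentMk y).supp} : Set (Set V)) := by
      intro C hC
      refine Set.mem_biUnion (Set.mem_image_of_mem _ hC) ?_
      rcases (key C hC).2.2.2.2.2.2 with h | h
      · exact Or.inl h
      · exact Or.inr (Set.mem_singleton_iff.mpr h)
    exact (hfinℬ.biUnion fun B _ => (Set.finite_singleton _).insert _).subset hsubS
  set ℬ' := {b : Finset (Sym2 V) | (↑b : Set (Sym2 V)) ∈ ℬ} with hℬ'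
  have hℬ'inf : ℬ'.Infinite := by
    intro hfinℬ'
    apply hℬinf
    apply (hfinℬ'.image (fun b : Finset (Sym2 V) => (↑b : Set (Sym2 V)))).subset
    intro B hB
    obtain ⟨C, hCS, hCB⟩ := hB
    have hBfin : B.Finite := by rw [← hCB]; exact (key C hCS).1
    refine ⟨hBfin.toFinset, ?_, hBfin.coe_toFinset⟩
    show (↑hBfin.toFinset : Set (Sym2 V)) ∈ ℬ
    rw [hBfin.coe_toFinset]
    exact ⟨C, hCS, hCB⟩
  have hcards : ∀ b ∈ ℬ', b.card ≤ n := by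
    intro b hb
    obtain ⟨C, hCS, hCB⟩ := hb
    rw [← Set.ncard_coe_finset, ← hCB]
    exact le_of_eq (hcardB C hCS)
  obtain ⟨Y', 𝔖, h𝔖sub, h𝔖inf, hYsub, hinter⟩ := infinite_delta_system n ℬ' hℬ'inf hcards
  have hbcard : ∀ b ∈ 𝔖, b.card = n := by
    intro b hb
    obtain ⟨C, hCS, hCB⟩ := h𝔖sub hb
    rw [← Set.ncard_coe_finset, ← hCB]
    exact hcardB C hCS
  obtain ⟨b₀, hb₀⟩ := h𝔖inf.nonempty
  obtain ⟨C₀', hC₀'S, hC₀'B⟩ := h𝔖sub hb₀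
  obtain ⟨b₁, hb₁d⟩ := (h𝔖inf.diff (Set.finite_singleton b₀)).nonempty
  have hb₁ : b₁ ∈ 𝔖 := hb₁d.1
  have hb₁0 : b₁ ≠ b₀ := by simpa using hb₁d.2
  have hY'lt : Y'.card < n := by
    have hI := hinter b₁ hb₁ b₀ hb₀ hb₁0
    have hYb₀ : Y' ⊆ b₀ := hYsub b₀ hb₀
    have hYne : Y' ≠ b₀ := by
      intro hq
      apply hb₁0
      have hsub01 : b₀ ⊆ b₁ := by
        rw [← hq]
        intro z hz
        rw [hq] at hz
        have : z ∈ b₁ ∩ b₀ := by rw [hI, hq]; exact hz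
        exact (Finset.mem_inter.mp this).1
      exact (Finset.eq_of_subset_of_card_le hsub01
        (le_of_eq ((hbcard b₁ hb₁).trans (hbcard b₀ hb₀).symm))).symm
    calc Y'.card < b₀.card := Finset.card_lt_card (ssubset_of_subset_of_ne hYb₀ hYne)
      _ = n := hbcard b₀ hb₀
  set Y := (↑Y' : Set (Sym2 V)) with hYdef
  have hsepb : ∀ b ∈ 𝔖, ¬ (Θ.deleteEdges (↑b : Set (Sym2 V))).Reachable x y := by
    intro b hb
    obtain ⟨C, hCS, hCB⟩ := h𝔖sub hb
    rw [← hCB]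
    exact (key C hCS).2.2.2.1
  have hnrY : ¬ (Θ.deleteEdges Y).Reachable x y := by
    rintro ⟨w⟩
    have hpick : ∀ b ∈ 𝔖, ∃ f, f ∈ w.edges ∧ f ∈ (↑b : Set (Sym2 V)) ∧ f ∉ Y :=
      fun b hb => exists_petal_edge w (hsepb b hb)
    choose f hf1 hf2 hf3 using hpick
    apply h𝔖inf
    have hgfin : {g : Sym2 V | g ∈ w.edges}.Finite := w.edges.finite_toSet
    apply Set.Finite.of_finite_image
      (f := fun b => if h : b ∈ 𝔖 then f b h else s(x, x)) ?_ ?_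
    · apply hgfin.subset
      rintro _ ⟨b, hb, rfl⟩
      simp only [dif_pos hb]
      exact hf1 b hb
    · intro b hb b' hb' hEq
      simp only [dif_pos hb, dif_pos hb'] at hEq
      by_contra hne
      have hI := hinter b hb b' hb' hne
      have hm : f b hb ∈ b ∩ b' := by
        rw [Finset.mem_inter]
        constructor
        · exact Finset.mem_coe.mp (hf2 b hb)
        · rw [hEq]; exact Finset.mem_coe.mp (hf2 b' hb')
      rw [hI] at hm
      exact hf3 b hb (Finset.mem_coe.mpr hm)
  have hYsubB₀ : Y ⊆ (↑b₀ : Set (Sym2 V)) := Finset.coe_subset.mpr (hYsub b₀ hb₀)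
  have hYedge : Y ⊆ Θ.edgeSet := by
    refine hYsubB₀.trans ?_
    rw [← hC₀'B]
    exact cutBdry_subset_edgeSet C₀'
  have hle : Θ.deleteEdges (↑b₀ : Set (Sym2 V)) ≤ Θ.deleteEdges Y :=
    SimpleGraph.deleteEdges_anti hYsubB₀
  have hsuppmono : ∀ v : V,
      ((Θ.deleteEdges (↑b₀ : Set (Sym2 V))).connectedComponentMk v).supp ⊆
      ((Θ.deleteEdges Y).connectedComponentMk v).supp := by
    intro v u hu
    rw [SimpleGraph.ConnectedComponent.mem_supp_iff, SimpleGraph.ConnectedComponent.eq] at hu ⊢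
    exact hu.mono hle
  have hXinf : ((Θ.deleteEdges Y).connectedComponentMk x).supp.Infinite := by
    have h5 := (key C₀' hC₀'S).2.2.2.2.1
    rw [hC₀'B] at h5
    exact h5.mono (hsuppmono x)
  have hYinf : ((Θ.deleteEdges Y).connectedComponentMk y).supp.Infinite := by
    have h5 := (key C₀' hC₀'S).2.2.2.2.2.1
    rw [hC₀'B] at h5
    exact h5.mono (hsuppmono y)
  have hxyne : (Θ.deleteEdges Y).connectedComponentMk x ≠
      (Θ.deleteEdges Y).connectedComponentMk y :=
    fun hq => hnrY (SimpleGraph.ConnectedComponent.eq.mp hq)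
  have hDcut : IsPCut Θ P ((Θ.deleteEdges Y).connectedComponentMk x).supp := by
    constructor
    · exact ⟨Y, ⟨Y'.finite_toSet, hYedge, fun hc => hnrY (hc.preconnected x y),
        (Θ.deleteEdges Y).connectedComponentMk x, (Θ.deleteEdges Y).connectedComponentMk y,
        hxyne, hXinf, hYinf⟩, (Θ.deleteEdges Y).connectedComponentMk x, hXinf, rfl⟩
    · refine hsub (↑b₀) _ b₀.finite_toSet
        ((cutBdry_supp_subset Y ((Θ.deleteEdges Y).connectedComponentMk x)).trans hYsubB₀) ?_
      have := (key C₀' hC₀'S).2.1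
      rwa [hC₀'B] at this
  have h6 : n ≤ (cutBdry Θ ((Θ.deleteEdges Y).connectedComponentMk x).supp).ncard :=
    hmin _ hDcut
  have h7 : (cutBdry Θ ((Θ.deleteEdges Y).connectedComponentMk x).supp).ncard ≤ Y.ncard :=
    Set.ncard_le_ncard (cutBdry_supp_subset Y _) Y'.finite_toSet
  have h8 : Y.ncard = Y'.card := Set.ncard_coe_finset Y'
  omega
end
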